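/- arXiv:0807.2815 — 6 statements merged into one kernel-verified Lean document; each statement's English description precedes it below -/
import Mathlib

section
/- Let (s_n)_{n≥1} be a sequence of positive integers bounded above by c, and define a_0 = 1, a_n = Σ_{k=1}^{n} s_k a_{n-k}. Let ψ be the unique solution in (1,∞) of Σ_{n≥1} s_n ψ^{-n} = 1. Then lim_{n→∞} a_n^{1/n} exists and equals ψ. -/
open Filter Topology

/-- Tail of a series: `∑_{k ≥ m} f k`. -/
noncomputable def stmtTail (f : ℕ → ℝ) (m : ℕ) : ℝ := ∑' k : ℕ, f (m + k)

lemma stmtTail_succ (f : ℕ → ℝ) (hf : Summable f) (m : ℕ) :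
    stmtTail f (m + 1) = stmtTail f m - f m := by
  have hsm : Summable fun k => f (m + k) := by
    have := (summable_nat_add_iff m).mpr hf
    exact this.congr (fun k => by rw [add_comm])
  have h := Summable.tsum_eq_zero_add hsm
  have h2 : ∑' (k : ℕ), f (m + (k + 1)) = stmtTail f (m + 1) :=
    tsum_congr fun k => by rw [show m + (k + 1) = m + 1 + k by omega]
  rw [h2, add_zero] at h
  have h3 : stmtTail f m = f m + stmtTail f (m + 1) := h
  linarith

theorem stmt_5 (c : ℕ) (s : ℕ → ℕ)
    (hs : ∀ n, 1 ≤ n → 1 ≤ s n ∧ s n ≤ c)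
    (a : ℕ → ℕ) (ha0 : a 0 = 1)
    (ha : ∀ n, 1 ≤ n → a n = ∑ k ∈ Finset.Icc 1 n, s k * a (n - k))
    (ψ : ℝ) (hψ1 : 1 < ψ)
    (hψ : ∑' n : ℕ, (s (n + 1) : ℝ) * ψ⁻¹ ^ (n + 1) = 1) :
    Tendsto (fun n : ℕ => (a n : ℝ) ^ ((1 : ℝ) / n)) atTop (𝓝 ψ) := by
  have hψ0 : (0:ℝ) < ψ := lt_trans one_pos hψ1
  have hinv0 : (0:ℝ) < ψ⁻¹ := inv_pos.mpr hψ0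
  have hinv1 : ψ⁻¹ < 1 := inv_lt_one_of_one_lt₀ hψ1
  have h1inv : (0:ℝ) < 1 - ψ⁻¹ := by linarith
  have hc1 : 1 ≤ c := le_trans (hs 1 le_rfl).1 (hs 1 le_rfl).2
  set f : ℕ → ℝ := fun n => (s (n + 1) : ℝ) * ψ⁻¹ ^ (n + 1) with hfdef
  have hf0 : ∀ n, 0 ≤ f n := fun n => by positivity
  have hfpos : ∀ n, 0 < f n := by
    intro n
    apply mul_pos _ (pow_pos hinv0 _)
    exact_mod_cast Nat.lt_of_lt_of_le one_pos (hs (n+1) (by omega)).1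
  have hfle : ∀ n, f n ≤ ((c:ℝ) * ψ⁻¹) * ψ⁻¹ ^ n := by
    intro n
    have : f n ≤ (c:ℝ) * ψ⁻¹ ^ (n+1) := by
      apply mul_le_mul_of_nonneg_right _ (pow_nonneg hinv0.le _)
      exact_mod_cast (hs (n+1) (by omega)).2
    calc f n ≤ (c:ℝ) * ψ⁻¹ ^ (n+1) := this
      _ = ((c:ℝ) * ψ⁻¹) * ψ⁻¹ ^ n := by rw [pow_succ]; ring
  have hsum : Summable f :=
    Summable.of_nonneg_of_le hf0 hfle
      (((summable_geometric_of_lt_one hinv0.le hinv1).mul_left _))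
  -- a ≥ 1
  have ha1 : ∀ n, 1 ≤ a n := by
    intro n
    cases n with
    | zero => simp [ha0]
    | succ m =>
      rw [ha (m+1) (by omega)]
      calc 1 ≤ s (m+1) * a ((m+1) - (m+1)) := by
              simp only [Nat.sub_self, ha0, mul_one]
              exact (hs (m+1) (by omega)).1
        _ ≤ ∑ k ∈ Finset.Icc 1 (m+1), s k * a ((m+1) - k) :=
            Finset.single_le_sum (f := fun k => s k * a ((m+1) - k))
              (fun i _ => Nat.zero_le _)
              (Finset.mem_Icc.mpr ⟨by omega, le_refl _⟩)
  -- a monotone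
  have hmono : Monotone a := by
    apply monotone_nat_of_le_succ
    intro n
    rw [ha (n+1) (by omega)]
    calc a n = 1 * a ((n+1) - 1) := by simp
      _ ≤ s 1 * a ((n+1) - 1) := Nat.mul_le_mul_right _ (hs 1 le_rfl).1
      _ ≤ ∑ k ∈ Finset.Icc 1 (n+1), s k * a ((n+1) - k) :=
          Finset.single_le_sum (f := fun k => s k * a ((n+1) - k))
            (fun i _ => Nat.zero_le _)
            (Finset.mem_Icc.mpr ⟨le_rfl, by omega⟩)
  -- partial sums of f are ≤ 1
  have hpartial : ∀ t : Finset ℕ, ∑ i ∈ t, f i ≤ 1 := by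
    intro t
    rw [← hψ]
    exact Summable.sum_le_tsum t (fun i _ => hf0 i) hsum
  -- Icc-sum rewriting helper
  have hIcc : ∀ n : ℕ, ∑ k ∈ Finset.Icc 1 (n+1), (s k : ℝ) * ψ⁻¹ ^ k
      = ∑ k ∈ Finset.range (n+1), f k := by
    intro n
    rw [← Finset.Ico_add_one_right_eq_Icc, Finset.sum_Ico_eq_sum_range]
    have e : n + 1 + 1 - 1 = n + 1 := by omega
    rw [e]
    apply Finset.sum_congr rfl
    intro k _
    rw [show 1 + k = k + 1 by omega, hfdef]
  -- upper bound: a n ≤ ψ ^ n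
  have hupper : ∀ n, (a n : ℝ) ≤ ψ ^ n := by
    intro n
    induction n using Nat.strong_induction_on with
    | _ n ih =>
      match n with
      | 0 => simp [ha0]
      | (m+1) =>
        rw [ha (m+1) (by omega)]
        push_cast
        calc ∑ k ∈ Finset.Icc 1 (m+1), (s k : ℝ) * (a (m+1-k) : ℝ)
            ≤ ∑ k ∈ Finset.Icc 1 (m+1), (s k : ℝ) * (ψ ^ (m+1) * ψ⁻¹ ^ k) := by
              apply Finset.sum_le_sum
              intro k hk
              obtain ⟨hk1, hk2⟩ := Finset.mem_Icc.mp hk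
              have hlt : m+1-k < m+1 := by omega
              have hle := ih _ hlt
              have hpow : ψ ^ (m+1) * ψ⁻¹ ^ k = ψ ^ (m+1-k) := by
                rw [← pow_sub_mul_pow ψ hk2, mul_assoc, ← mul_pow,
                  mul_inv_cancel₀ (ne_of_gt hψ0), one_pow, mul_one]
              rw [hpow]
              exact mul_le_mul_of_nonneg_left hle (Nat.cast_nonneg _)
          _ = ψ ^ (m+1) * ∑ k ∈ Finset.Icc 1 (m+1), (s k : ℝ) * ψ⁻¹ ^ k := by
              rw [Finset.mul_sum]
              exact Finset.sum_congr rfl (fun k _ => by ring)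
          _ ≤ ψ ^ (m+1) * 1 := by
              apply mul_le_mul_of_nonneg_left _ (pow_nonneg hψ0.le _)
              rw [hIcc m]
              exact hpartial _
          _ = ψ ^ (m+1) := mul_one _
  have hble : ∀ n, (a n : ℝ) * ψ⁻¹ ^ n ≤ 1 := by
    intro n
    have h1 : (a n : ℝ) * ψ⁻¹ ^ n ≤ ψ ^ n * ψ⁻¹ ^ n :=
      mul_le_mul_of_nonneg_right (hupper n) (pow_nonneg hinv0.le _)
    have h2 : ψ ^ n * ψ⁻¹ ^ n = 1 := by
      rw [← mul_pow, mul_inv_cancel₀ (ne_of_gt hψ0), one_pow]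
    linarith
  have hb0 : ∀ n, 0 ≤ (a n : ℝ) * ψ⁻¹ ^ n := fun n => by positivity
  -- tail facts
  have ht0 : stmtTail f 0 = 1 := by
    unfold stmtTail
    rw [← hψ]
    apply tsum_congr; intro k; rw [zero_add]
  have htail_nonneg : ∀ m, 0 ≤ stmtTail f m :=
    fun m => tsum_nonneg (fun k => hf0 _)
  set C : ℝ := (c:ℝ) * ψ⁻¹ / (1 - ψ⁻¹) with hCdef
  have hC0 : 0 < C := by
    apply div_pos _ h1inv
    apply mul_pos _ hinv0
    exact_mod_cast Nat.lt_of_lt_of_le one_pos hc1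
  have htail_le : ∀ m, stmtTail f m ≤ C * ψ⁻¹ ^ m := by
    intro m
    have hsm : Summable fun k => f (m + k) := by
      have := (summable_nat_add_iff m).mpr hsum
      exact this.congr (fun k => by rw [add_comm])
    have hg : Summable fun k : ℕ => ((c:ℝ) * ψ⁻¹ ^ (m+1)) * ψ⁻¹ ^ k :=
      (summable_geometric_of_lt_one hinv0.le hinv1).mul_left _
    have h1 : stmtTail f m ≤ ∑' k : ℕ, ((c:ℝ) * ψ⁻¹ ^ (m+1)) * ψ⁻¹ ^ k := by
      apply Summable.tsum_le_tsum _ hsm hg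
      intro k
      calc f (m + k) ≤ (c:ℝ) * ψ⁻¹ ^ (m + k + 1) := by
            apply mul_le_mul_of_nonneg_right _ (pow_nonneg hinv0.le _)
            exact_mod_cast (hs (m+k+1) (by omega)).2
        _ = ((c:ℝ) * ψ⁻¹ ^ (m+1)) * ψ⁻¹ ^ k := by
            rw [show m + k + 1 = (m + 1) + k by omega, pow_add]; ring
    rw [tsum_mul_left, tsum_geometric_of_lt_one hinv0.le hinv1] at h1
    calc stmtTail f m ≤ (c:ℝ) * ψ⁻¹ ^ (m+1) * (1 - ψ⁻¹)⁻¹ := h1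
      _ = C * ψ⁻¹ ^ m := by rw [hCdef, pow_succ, div_eq_mul_inv]; ring
  -- the real recurrence, reflected
  have hrec : ∀ N : ℕ, (a (N+1) : ℝ) = ∑ n ∈ Finset.range (N+1), (s (N - n + 1) : ℝ) * (a n : ℝ) := by
    intro N
    rw [ha (N+1) (by omega)]
    push_cast
    rw [← Finset.Ico_add_one_right_eq_Icc, Finset.sum_Ico_eq_sum_range]
    have e : N + 1 + 1 - 1 = N + 1 := by omega
    rw [e, ← Finset.sum_range_reflect (fun n => (s (N - n + 1) : ℝ) * (a n : ℝ)) (N+1)]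
    apply Finset.sum_congr rfl
    intro j hj
    have hj' : j ≤ N := by
      have := Finset.mem_range.mp hj; omega
    rw [show N + 1 - 1 - j = N - j by omega, show N + 1 - (1 + j) = N - j by omega,
      show N - (N - j) + 1 = 1 + j by omega]
  -- key renewal identity
  have key : ∀ N : ℕ, ∑ n ∈ Finset.range (N+1),
      (a n : ℝ) * ψ⁻¹ ^ n * stmtTail f (N - n) = 1 := by
    intro N
    induction N with
    | zero => simp [ha0, ht0]
    | succ N ihN =>
      rw [Finset.sum_range_succ, Nat.sub_self, ht0]
      have hstep : ∑ n ∈ Finset.range (N+1), (a n : ℝ) * ψ⁻¹ ^ n * stmtTail f (N + 1 - n)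
          = ∑ n ∈ Finset.range (N+1),
              ((a n : ℝ) * ψ⁻¹ ^ n * stmtTail f (N - n)
                - ψ⁻¹ ^ (N+1) * ((s (N - n + 1) : ℝ) * (a n : ℝ))) := by
        apply Finset.sum_congr rfl
        intro n hn
        have hn' : n ≤ N := by
          have := Finset.mem_range.mp hn; omega
        have e1 : N + 1 - n = (N - n) + 1 := by omega
        rw [e1, stmtTail_succ f hsum (N - n)]
        have e2 : f (N - n) = (s (N - n + 1) : ℝ) * ψ⁻¹ ^ (N - n + 1) := rfl
        have e3 : ψ⁻¹ ^ n * ψ⁻¹ ^ (N - n + 1) = ψ⁻¹ ^ (N + 1) := by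
          rw [← pow_add]; congr 1; omega
        rw [e2]
        linear_combination (-(a n : ℝ) * (s (N - n + 1) : ℝ)) * e3
      rw [hstep, Finset.sum_sub_distrib, ihN, ← Finset.mul_sum, ← hrec N]
      ring
  -- choose window length M
  set D : ℝ := C * (1 - ψ⁻¹)⁻¹ with hDdef
  have hD0 : 0 < D := mul_pos hC0 (inv_pos.mpr h1inv)
  obtain ⟨M, hM1, hM2⟩ : ∃ M : ℕ, 1 ≤ M ∧ D * ψ⁻¹ ^ M ≤ 1/2 := by
    have h := tendsto_pow_atTop_nhds_zero_of_lt_one hinv0.le hinv1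
    have hev : ∀ᶠ M : ℕ in atTop, ψ⁻¹ ^ M < 1/(2*D) :=
      h.eventually (gt_mem_nhds (by positivity))
    obtain ⟨M, hM, hM'⟩ := (hev.and (eventually_ge_atTop 1)).exists
    refine ⟨M, hM', ?_⟩
    have := mul_le_mul_of_nonneg_left hM.le hD0.le
    calc D * ψ⁻¹ ^ M ≤ D * (1/(2*D)) := this
      _ = 1/2 := by field_simp
  set δ : ℝ := 1 / (2 * C * M) with hδdef
  have hδ0 : 0 < δ := by
    rw [hδdef]
    have : (0:ℝ) < M := by exact_mod_cast hM1
    positivity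
  -- window lemma
  have hwin : ∀ N : ℕ, M ≤ N → ∃ m : ℕ, m ≤ N ∧ N < m + M ∧ δ * ψ ^ m ≤ (a m : ℝ) := by
    intro N hMN
    by_contra hcon
    push_neg at hcon
    have h1 : (1:ℝ) = ∑ j ∈ Finset.range (N+1),
        (a (N - j) : ℝ) * ψ⁻¹ ^ (N - j) * stmtTail f j := by
      rw [← key N, ← Finset.sum_range_reflect
        (fun n => (a n : ℝ) * ψ⁻¹ ^ n * stmtTail f (N - n)) (N+1)]
      apply Finset.sum_congr rfl
      intro j hj
      have hj' : j ≤ N := by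
        have := Finset.mem_range.mp hj; omega
      have e1 : N + 1 - 1 - j = N - j := by omega
      have e2 : N - (N - j) = j := by omega
      rw [e1, e2]
    rw [Finset.range_eq_Ico,
      ← Finset.sum_Ico_consecutive _ (Nat.zero_le M) (by omega : M ≤ N+1)] at h1
    have hhead : ∑ j ∈ Finset.Ico 0 M,
        (a (N - j) : ℝ) * ψ⁻¹ ^ (N - j) * stmtTail f j < 1/2 := by
      have hlt : ∀ j ∈ Finset.Ico 0 M,
          (a (N - j) : ℝ) * ψ⁻¹ ^ (N - j) * stmtTail f j < δ * stmtTail f j := by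
        intro j hj
        have hjM : j < M := (Finset.mem_Ico.mp hj).2
        have hm1 : N - j ≤ N := by omega
        have hm2 : N < (N - j) + M := by omega
        have hAlt : (a (N - j) : ℝ) < δ * ψ ^ (N - j) := hcon (N - j) hm1 hm2
        have htpos : 0 < stmtTail f j := by
          have : f j ≤ stmtTail f j := by
            unfold stmtTail
            have hsm : Summable fun k => f (j + k) := by
              have := (summable_nat_add_iff j).mpr hsum
              exact this.congr (fun k => by rw [add_comm])
            have := Summable.le_tsum hsm 0 (fun k _ => hf0 _)
            simpa using this
          linarith [hfpos j]
        have hb : (a (N - j) : ℝ) * ψ⁻¹ ^ (N - j) < δ := by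
          have h2 : (a (N - j) : ℝ) * ψ⁻¹ ^ (N - j) < (δ * ψ ^ (N - j)) * ψ⁻¹ ^ (N - j) :=
            mul_lt_mul_of_pos_right hAlt (pow_pos hinv0 _)
          have h3 : (δ * ψ ^ (N - j)) * ψ⁻¹ ^ (N - j) = δ := by
            rw [mul_assoc, ← mul_pow, mul_inv_cancel₀ (ne_of_gt hψ0), one_pow, mul_one]
          linarith
        exact mul_lt_mul_of_pos_right hb htpos
      have hne : (Finset.Ico 0 M).Nonempty := by
        rw [Finset.nonempty_Ico]; omega
      have h4 : ∑ j ∈ Finset.Ico 0 M,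
          (a (N - j) : ℝ) * ψ⁻¹ ^ (N - j) * stmtTail f j
          < ∑ j ∈ Finset.Ico 0 M, δ * stmtTail f j :=
        Finset.sum_lt_sum_of_nonempty hne hlt
      have h5 : ∑ j ∈ Finset.Ico 0 M, δ * stmtTail f j ≤ ∑ j ∈ Finset.Ico 0 M, δ * C := by
        apply Finset.sum_le_sum
        intro j _
        apply mul_le_mul_of_nonneg_left _ hδ0.le
        calc stmtTail f j ≤ C * ψ⁻¹ ^ j := htail_le j
          _ ≤ C * 1 := by
              apply mul_le_mul_of_nonneg_left _ hC0.le
              exact pow_le_one₀ hinv0.le hinv1.le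
          _ = C := mul_one _
      have h6 : ∑ j ∈ Finset.Ico 0 M, δ * C = 1/2 := by
        rw [Finset.sum_const, Nat.card_Ico, Nat.sub_zero, nsmul_eq_mul, hδdef]
        have hM0 : (M:ℝ) ≠ 0 := by
          have : (0:ℝ) < M := by exact_mod_cast hM1
          exact ne_of_gt this
        field_simp
      linarith
    have htailpart : ∑ j ∈ Finset.Ico M (N+1),
        (a (N - j) : ℝ) * ψ⁻¹ ^ (N - j) * stmtTail f j ≤ 1/2 := by
      have h4 : ∑ j ∈ Finset.Ico M (N+1),
          (a (N - j) : ℝ) * ψ⁻¹ ^ (N - j) * stmtTail f j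
          ≤ ∑ j ∈ Finset.Ico M (N+1), C * ψ⁻¹ ^ j := by
        apply Finset.sum_le_sum
        intro j _
        calc (a (N - j) : ℝ) * ψ⁻¹ ^ (N - j) * stmtTail f j
            ≤ 1 * stmtTail f j :=
              mul_le_mul_of_nonneg_right (hble _) (htail_nonneg j)
          _ = stmtTail f j := one_mul _
          _ ≤ C * ψ⁻¹ ^ j := htail_le j
      have h5 : ∑ j ∈ Finset.Ico M (N+1), C * ψ⁻¹ ^ j ≤ D * ψ⁻¹ ^ M := by
        rw [← Finset.mul_sum, Finset.sum_Ico_eq_sum_range]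
        have h6 : ∑ k ∈ Finset.range (N + 1 - M), ψ⁻¹ ^ (M + k)
            = ψ⁻¹ ^ M * ∑ k ∈ Finset.range (N + 1 - M), ψ⁻¹ ^ k := by
          rw [Finset.mul_sum]
          exact Finset.sum_congr rfl (fun k _ => by rw [pow_add])
        rw [h6]
        have h7 : ∑ k ∈ Finset.range (N + 1 - M), ψ⁻¹ ^ k ≤ (1 - ψ⁻¹)⁻¹ := by
          rw [← tsum_geometric_of_lt_one hinv0.le hinv1]
          exact Summable.sum_le_tsum _ (fun i _ => (pow_pos hinv0 i).le)
            (summable_geometric_of_lt_one hinv0.le hinv1)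
        calc C * (ψ⁻¹ ^ M * ∑ k ∈ Finset.range (N + 1 - M), ψ⁻¹ ^ k)
            ≤ C * (ψ⁻¹ ^ M * (1 - ψ⁻¹)⁻¹) := by
              apply mul_le_mul_of_nonneg_left _ hC0.le
              exact mul_le_mul_of_nonneg_left h7 (pow_pos hinv0 M).le
          _ = D * ψ⁻¹ ^ M := by rw [hDdef]; ring
      linarith
    linarith
  -- eventual lower bound
  set ε : ℝ := δ * ψ⁻¹ ^ M with hεdef
  have hε0 : 0 < ε := mul_pos hδ0 (pow_pos hinv0 M)
  have hlow : ∀ n : ℕ, M ≤ n → ε * ψ ^ n ≤ (a n : ℝ) := by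
    intro n hn
    obtain ⟨m, hm1, hm2, hm3⟩ := hwin n hn
    have hma : (a m : ℝ) ≤ (a n : ℝ) := by exact_mod_cast hmono hm1
    have hψn : ψ ^ n ≤ ψ ^ (m + M) := pow_le_pow_right₀ hψ1.le (by omega)
    have hq : ψ⁻¹ ^ M * ψ ^ M = 1 := by
      rw [← mul_pow, inv_mul_cancel₀ (ne_of_gt hψ0), one_pow]
    calc ε * ψ ^ n ≤ ε * ψ ^ (m + M) :=
          mul_le_mul_of_nonneg_left hψn hε0.le
      _ = δ * ψ ^ m := by
          rw [hεdef, pow_add]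
          linear_combination (δ * ψ ^ m) * hq
      _ ≤ (a m : ℝ) := hm3
      _ ≤ (a n : ℝ) := hma
  -- squeeze
  have hglim : Tendsto (fun n : ℕ => ε ^ ((1:ℝ)/n) * ψ) atTop (𝓝 ψ) := by
    have hc : ContinuousAt (fun x : ℝ => ε ^ x) 0 :=
      Real.continuousAt_const_rpow (ne_of_gt hε0)
    have h1 : Tendsto (fun n : ℕ => ε ^ ((1:ℝ)/n)) atTop (𝓝 1) := by
      have := hc.tendsto.comp tendsto_one_div_atTop_nhds_zero_nat
      simpa [Real.rpow_zero, Function.comp_def] using this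
    have := h1.mul (tendsto_const_nhds (x := ψ) (f := atTop (α := ℕ)))
    simpa using this
  apply tendsto_of_tendsto_of_tendsto_of_le_of_le' hglim
    (tendsto_const_nhds (x := ψ) (f := atTop (α := ℕ)))
  · filter_upwards [eventually_ge_atTop (max M 1)] with n hn
    have hnM : M ≤ n := le_trans (le_max_left _ _) hn
    have hn1 : 1 ≤ n := le_trans (le_max_right _ _) hn
    have hn0 : (n:ℝ) ≠ 0 := Nat.cast_ne_zero.mpr (by omega)
    have hl := hlow n hnM
    have hstep : (ε * ψ ^ n) ^ ((1:ℝ)/n) ≤ (a n : ℝ) ^ ((1:ℝ)/n) :=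
      Real.rpow_le_rpow (by positivity) hl (by positivity)
    calc ε ^ ((1:ℝ)/n) * ψ = (ε * ψ ^ n) ^ ((1:ℝ)/n) := by
          rw [Real.mul_rpow hε0.le (by positivity), ← Real.rpow_natCast ψ n,
            ← Real.rpow_mul hψ0.le, mul_one_div, div_self hn0, Real.rpow_one]
      _ ≤ (a n : ℝ) ^ ((1:ℝ)/n) := hstep
  · filter_upwards [eventually_ge_atTop 1] with n hn
    have hn0 : (n:ℝ) ≠ 0 := Nat.cast_ne_zero.mpr (by omega)
    have hstep : (a n : ℝ) ^ ((1:ℝ)/n) ≤ (ψ ^ n) ^ ((1:ℝ)/n) :=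
      Real.rpow_le_rpow (Nat.cast_nonneg _) (hupper n) (by positivity)
    calc (a n : ℝ) ^ ((1:ℝ)/n) ≤ (ψ ^ n) ^ ((1:ℝ)/n) := hstep
      _ = ψ := by
          rw [← Real.rpow_natCast ψ n, ← Real.rpow_mul hψ0.le,
            mul_one_div, div_self hn0, Real.rpow_one]
end

section
/- Let (r_n) ⪯ (t_n) be sequences of positive integers bounded above by c such that t_n = r_n for all n < k and t_n − r_n ≥ b − 1 for all n ≥ k, for some integer k and real b. Let ρ and τ be the growth rates (unique positive solutions of Σ r_n x^{-n} = 1 and Σ t_n x^{-n} = 1). Then for every real γ with ρ ≤ γ ≤ min{b, τ}, there exists a sequence (s_n) of positive integers with r_n ≤ s_n ≤ t_n for all n whose growth rate equals γ. -/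
set_option maxHeartbeats 1000000

private lemma aux_summable (c : ℕ) (f : ℕ → ℕ) (hf : ∀ n, 1 ≤ n → f n ≤ c)
    (x : ℝ) (hx0 : 0 ≤ x) (hx1 : x < 1) :
    Summable (fun m : ℕ => (f (m + 1) : ℝ) * x ^ (m + 1)) := by
  have h := (summable_geometric_of_lt_one hx0 hx1).mul_left ((c : ℝ) * x)
  apply Summable.of_nonneg_of_le (fun m => by positivity) (fun m => ?_) h
  calc (f (m + 1) : ℝ) * x ^ (m + 1) ≤ (c : ℝ) * x ^ (m + 1) := by
        apply mul_le_mul_of_nonneg_right _ (by positivity)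
        exact_mod_cast hf (m + 1) (Nat.le_add_left 1 m)
    _ = (c : ℝ) * x * x ^ m := by ring

theorem stmt_9 (c : ℕ) (r t : ℕ → ℕ)
    (hr : ∀ n, 1 ≤ n → 1 ≤ r n ∧ r n ≤ c)
    (ht : ∀ n, 1 ≤ n → 1 ≤ t n ∧ t n ≤ c)
    (hrt : ∀ n, 1 ≤ n → r n ≤ t n)
    (k : ℕ) (b : ℝ)
    (heq : ∀ n, 1 ≤ n → n < k → t n = r n)
    (hgap : ∀ n, k ≤ n → b - 1 ≤ (t n : ℝ) - (r n : ℝ))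
    (ρ τ : ℝ) (hρ1 : 1 < ρ) (hτ1 : 1 < τ)
    (hρ : ∑' n : ℕ, (r (n + 1) : ℝ) * ρ⁻¹ ^ (n + 1) = 1)
    (hτ : ∑' n : ℕ, (t (n + 1) : ℝ) * τ⁻¹ ^ (n + 1) = 1) :
    ∀ γ : ℝ, ρ ≤ γ → γ ≤ min b τ →
      ∃ s : ℕ → ℕ, (∀ n, 1 ≤ n → r n ≤ s n ∧ s n ≤ t n) ∧
        ∑' n : ℕ, (s (n + 1) : ℝ) * γ⁻¹ ^ (n + 1) = 1 := by
  intro γ hργ hγmin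
  have hγb : γ ≤ b := le_trans hγmin (min_le_left _ _)
  have hγτ : γ ≤ τ := le_trans hγmin (min_le_right _ _)
  have hγ1 : 1 < γ := lt_of_lt_of_le hρ1 hργ
  have hγ0 : (0 : ℝ) < γ := by linarith
  set q : ℝ := γ⁻¹ with hqdef
  have hq0 : 0 < q := inv_pos.mpr hγ0
  have hq1 : q < 1 := inv_lt_one_of_one_lt₀ hγ1
  have hqγ : γ * q = 1 := mul_inv_cancel₀ (ne_of_gt hγ0)
  -- summabilities
  have hsumr : Summable (fun m : ℕ => (r (m + 1) : ℝ) * q ^ (m + 1)) :=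
    aux_summable c r (fun n hn => (hr n hn).2) q hq0.le hq1
  have hsumt : Summable (fun m : ℕ => (t (m + 1) : ℝ) * q ^ (m + 1)) :=
    aux_summable c t (fun n hn => (ht n hn).2) q hq0.le hq1
  have hsumrρ : Summable (fun m : ℕ => (r (m + 1) : ℝ) * ρ⁻¹ ^ (m + 1)) :=
    aux_summable c r (fun n hn => (hr n hn).2) ρ⁻¹ (inv_pos.mpr (by linarith)).le
      (inv_lt_one_of_one_lt₀ hρ1)
  have hsumtτ : Summable (fun m : ℕ => (t (m + 1) : ℝ) * τ⁻¹ ^ (m + 1)) :=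
    aux_summable c t (fun n hn => (ht n hn).2) τ⁻¹ (inv_pos.mpr (by linarith)).le
      (inv_lt_one_of_one_lt₀ hτ1)
  set R : ℝ := ∑' m : ℕ, (r (m + 1) : ℝ) * q ^ (m + 1) with hRdef
  set T : ℝ := ∑' m : ℕ, (t (m + 1) : ℝ) * q ^ (m + 1) with hTdef
  -- R ≤ 1
  have hR1 : R ≤ 1 := by
    rw [← hρ]
    apply Summable.tsum_le_tsum _ hsumr hsumrρ
    intro m
    apply mul_le_mul_of_nonneg_left _ (by positivity)
    apply pow_le_pow_left₀ hq0.le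
    exact inv_anti₀ (by linarith) hργ
  -- 1 ≤ T
  have hT1 : 1 ≤ T := by
    rw [← hτ]
    apply Summable.tsum_le_tsum _ hsumtτ hsumt
    intro m
    apply mul_le_mul_of_nonneg_left _ (by positivity)
    apply pow_le_pow_left₀ (inv_pos.mpr (by linarith)).le
    exact inv_anti₀ hγ0 hγτ
  -- the difference series
  set g : ℕ → ℝ := fun m => ((t (m + 1) : ℝ) - (r (m + 1) : ℝ)) * q ^ (m + 1) with hgdef
  have hg0 : ∀ m, 0 ≤ g m := by
    intro m
    apply mul_nonneg _ (by positivity)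
    have := hrt (m + 1) (Nat.le_add_left 1 m)
    have : (r (m + 1) : ℝ) ≤ (t (m + 1) : ℝ) := by exact_mod_cast this
    linarith
  have hsumg : Summable g := by
    have : g = fun m => (t (m + 1) : ℝ) * q ^ (m + 1) - (r (m + 1) : ℝ) * q ^ (m + 1) := by
      funext m; simp only [hgdef]; ring
    rw [this]; exact hsumt.sub hsumr
  set Tail : ℕ → ℝ := fun n => ∑' m : ℕ, g (n + m) with hTaildef
  have hsumg' : ∀ n, Summable (fun m => g (n + m)) := fun n =>
    ((summable_nat_add_iff n).mpr hsumg).congr (fun m => by rw [add_comm])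
  have hTailrec : ∀ n, Tail n = g n + Tail (n + 1) := by
    intro n
    have h := Summable.tsum_eq_zero_add (hsumg' n)
    calc Tail n = g (n + 0) + ∑' m : ℕ, g (n + (m + 1)) := h
      _ = g n + Tail (n + 1) := by
          rw [add_zero]
          congr 1
          apply tsum_congr
          intro m
          congr 1
          omega
  have hTail0 : Tail 0 = T - R := by
    rw [hTaildef]
    simp only [zero_add]
    have : (fun m : ℕ => g m) = fun m => (t (m + 1) : ℝ) * q ^ (m + 1) - (r (m + 1) : ℝ) * q ^ (m + 1) := by
      funext m; simp only [hgdef]; ring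
    rw [this, Summable.tsum_sub hsumt hsumr]
  -- geometric tail computation
  have hgeo : ∀ n : ℕ, ∑' m : ℕ, q ^ (n + m) = q ^ n * (1 - q)⁻¹ := by
    intro n
    rw [← tsum_geometric_of_lt_one hq0.le hq1, ← tsum_mul_left]
    apply tsum_congr
    intro m
    rw [pow_add]
  -- tail lower bound when k ≤ n + 1
  have hTailge : ∀ n : ℕ, k ≤ n + 1 → q ^ (n + 1) ≤ Tail (n + 1) := by
    intro n hk
    have h1 : ∀ m : ℕ, (γ - 1) * q ^ (n + 1 + m + 1) ≤ g (n + 1 + m) := by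
      intro m
      have hkm : k ≤ n + 1 + m + 1 := by omega
      have := hgap (n + 1 + m + 1) hkm
      have hb : γ - 1 ≤ (t (n + 1 + m + 1) : ℝ) - (r (n + 1 + m + 1) : ℝ) := by linarith
      simp only [hgdef]
      apply mul_le_mul_of_nonneg_right hb (by positivity)
    have hsl : Summable (fun m : ℕ => (γ - 1) * q ^ (n + 1 + m + 1)) := by
      apply Summable.mul_left
      have : (fun m : ℕ => q ^ (n + 1 + m + 1)) = fun m => q ^ (n + 2) * q ^ m := by
        funext m; rw [← pow_add]; ring_nf
      rw [this]
      exact (summable_geometric_of_lt_one hq0.le hq1).mul_left _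
    have h2 : ∑' m : ℕ, (γ - 1) * q ^ (n + 1 + m + 1) ≤ Tail (n + 1) :=
      Summable.tsum_le_tsum h1 hsl (hsumg' (n + 1))
    have h3 : ∑' m : ℕ, (γ - 1) * q ^ (n + 1 + m + 1) = q ^ (n + 1) := by
      rw [tsum_mul_left]
      have : (fun m : ℕ => q ^ (n + 1 + m + 1)) = fun m => q ^ (n + 2 + m) := by
        funext m; ring_nf
      rw [this, hgeo (n + 2)]
      have h1q : 1 - q = (γ - 1) * q := by
        field_simp [hqdef]
        linarith [hqγ]
      rw [h1q]
      have hγ1' : γ - 1 ≠ 0 := by intro h; linarith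
      rw [mul_inv, pow_succ]
      field_simp
    linarith [h2, h3.symm.le]
  -- the greedy construction
  set A : ℕ → ℝ → ℕ := fun n d => min ⌊d * γ ^ (n + 1)⌋₊ (t (n + 1) - r (n + 1)) with hAdef
  set D : ℕ → ℝ := fun n => Nat.rec (1 - R) (fun n d => d - (A n d : ℝ) * q ^ (n + 1)) n with hDdef
  have hD0 : D 0 = 1 - R := rfl
  have hDs : ∀ n, D (n + 1) = D n - (A n (D n) : ℝ) * q ^ (n + 1) := fun n => rfl
  -- key invariant
  have key : ∀ n, 0 ≤ D n ∧ D n ≤ Tail n := by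
    intro n
    induction n with
    | zero =>
      constructor
      · rw [hD0]; linarith
      · rw [hD0, hTail0]; linarith
    | succ n ih =>
      obtain ⟨h0, h1⟩ := ih
      have hrt' : r (n + 1) ≤ t (n + 1) := hrt (n + 1) (Nat.le_add_left 1 n)
      have hcap : ((t (n + 1) - r (n + 1) : ℕ) : ℝ) = (t (n + 1) : ℝ) - (r (n + 1) : ℝ) :=
        Nat.cast_sub hrt'
      have hγpow : (0 : ℝ) < γ ^ (n + 1) := by positivity
      have hDγ : 0 ≤ D n * γ ^ (n + 1) := mul_nonneg h0 hγpow.le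
      have hpowmul : γ ^ (n + 1) * q ^ (n + 1) = 1 := by
        rw [← mul_pow, hqγ, one_pow]
      have hnonneg : 0 ≤ D (n + 1) := by
        rw [hDs]
        have hA : (A n (D n) : ℝ) ≤ ⌊D n * γ ^ (n + 1)⌋₊ := by
          exact_mod_cast Nat.min_le_left _ _
        have hfl : (⌊D n * γ ^ (n + 1)⌋₊ : ℝ) ≤ D n * γ ^ (n + 1) := Nat.floor_le hDγ
        have : (A n (D n) : ℝ) * q ^ (n + 1) ≤ D n * γ ^ (n + 1) * q ^ (n + 1) := by
          apply mul_le_mul_of_nonneg_right (le_trans hA hfl) (by positivity)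
        rw [mul_assoc, hpowmul, mul_one] at this
        linarith
      refine ⟨hnonneg, ?_⟩
      by_cases hc : t (n + 1) - r (n + 1) ≤ ⌊D n * γ ^ (n + 1)⌋₊
      · -- A = cap
        have hA : A n (D n) = t (n + 1) - r (n + 1) := min_eq_right hc
        rw [hDs, hA, hcap]
        have := hTailrec n
        simp only [hgdef] at this
        linarith
      · -- A = floor, and the floor is strictly below cap
        push_neg at hc
        have hA : A n (D n) = ⌊D n * γ ^ (n + 1)⌋₊ := min_eq_left hc.le
        have hlt : D (n + 1) < q ^ (n + 1) := by
          rw [hDs, hA]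
          have := Nat.lt_floor_add_one (D n * γ ^ (n + 1))
          have h2 : D n < ((⌊D n * γ ^ (n + 1)⌋₊ : ℝ) + 1) * q ^ (n + 1) := by
            have := mul_lt_mul_of_pos_right this (pow_pos hq0 (n + 1))
            rw [mul_assoc, hpowmul, mul_one] at this
            linarith [this]
          nlinarith [this, h2]
        have hk : k ≤ n + 1 := by
          by_contra hk'
          push_neg at hk'
          have := heq (n + 1) (Nat.le_add_left 1 n) hk'
          omega
        linarith [hTailge n hk, hlt]
  -- partial sum formula
  have hDsum : ∀ n, D n = (1 - R) - ∑ m ∈ Finset.range n, (A m (D m) : ℝ) * q ^ (m + 1) := by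
    intro n
    induction n with
    | zero => simp [hD0]
    | succ n ih =>
      rw [hDs, Finset.sum_range_succ, ih]
      ring
  -- D tends to 0
  have hTail_tendsto : Filter.Tendsto Tail Filter.atTop (nhds 0) := by
    have := tendsto_sum_nat_add g
    have heq' : Tail = fun i => ∑' m : ℕ, g (m + i) := by
      funext i
      apply tsum_congr
      intro m
      congr 1
      omega
    rw [heq']
    exact this
  have hD_tendsto : Filter.Tendsto D Filter.atTop (nhds 0) := by
    apply squeeze_zero (fun n => (key n).1) (fun n => (key n).2) hTail_tendsto
  -- summability of the A-series
  have hsumA : Summable (fun m : ℕ => (A m (D m) : ℝ) * q ^ (m + 1)) := by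
    have hbd : ∀ n, 1 ≤ n → (fun j => A j (D j)) (n - 1) ≤ c := by
      intro n hn
      calc A (n - 1) (D (n - 1)) ≤ t (n - 1 + 1) - r (n - 1 + 1) := Nat.min_le_right _ _
        _ ≤ t (n - 1 + 1) := Nat.sub_le _ _
        _ ≤ c := (ht (n - 1 + 1) (Nat.le_add_left 1 _)).2
    have := aux_summable c (fun j => if j = 0 then 0 else A (j - 1) (D (j - 1)))
      (fun n hn => by show (if n = 0 then 0 else A (n - 1) (D (n - 1))) ≤ c
                      rw [if_neg (by omega : n ≠ 0)]; exact hbd n hn)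
      q hq0.le hq1
    simpa using this
  -- value of the A-series
  have hAval : ∑' m : ℕ, (A m (D m) : ℝ) * q ^ (m + 1) = 1 - R := by
    have h1 := hsumA.hasSum.tendsto_sum_nat
    have h2 : Filter.Tendsto (fun n => ∑ i ∈ Finset.range n, (A i (D i) : ℝ) * q ^ (i + 1))
        Filter.atTop (nhds (1 - R)) := by
      have : (fun n => ∑ i ∈ Finset.range n, (A i (D i) : ℝ) * q ^ (i + 1))
          = fun n => (1 - R) - D n := by
        funext n
        rw [hDsum n]; ring
      rw [this]
      have := hD_tendsto.const_sub (1 - R)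
      simpa using this
    exact tendsto_nhds_unique h1 h2
  -- the sequence s
  refine ⟨fun n => Nat.rec 0 (fun m _ => r (m + 1) + A m (D m)) n, ?_, ?_⟩
  · intro n hn
    obtain ⟨m, rfl⟩ : ∃ m, n = m + 1 := ⟨n - 1, by omega⟩
    constructor
    · exact Nat.le_add_right _ _
    · show r (m + 1) + A m (D m) ≤ t (m + 1)
      have : A m (D m) ≤ t (m + 1) - r (m + 1) := Nat.min_le_right _ _
      have := hrt (m + 1) (Nat.le_add_left 1 m)
      omega
  · show ∑' m : ℕ, ((r (m + 1) + A m (D m) : ℕ) : ℝ) * q ^ (m + 1) = 1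
    have : (fun m : ℕ => ((r (m + 1) + A m (D m) : ℕ) : ℝ) * q ^ (m + 1))
        = fun m => (r (m + 1) : ℝ) * q ^ (m + 1) + (A m (D m) : ℝ) * q ^ (m + 1) := by
      funext m; push_cast; ring
    rw [this, Summable.tsum_add hsumr hsumA, ← hRdef, hAval]
    ring
end

section
/- Let (r_n) ⪯ (t_n) be sequences of positive integers bounded above by c with r_n ≠ t_n for infinitely many n. Then the set S of growth rates of sequences (s_n) with r_n ≤ s_n ≤ t_n for all n (growth rate meaning the unique positive solution of Σ s_n x^{-n} = 1) is a perfect set: S is closed and every point of S is an accumulation point of S. -/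
open Filter Set Topology

noncomputable def FF (s : ℕ → ℕ) (x : ℝ) : ℝ := ∑' n : ℕ, (s (n + 1) : ℝ) * x⁻¹ ^ (n + 1)

lemma aux_geo (x : ℝ) (hx : 1 < x) : ∑' n : ℕ, x⁻¹ ^ (n + 1) = (x - 1)⁻¹ := by
  have hx0 : (0:ℝ) < x := lt_trans one_pos hx
  have h0 : (0:ℝ) ≤ x⁻¹ := by positivity
  have h1 : x⁻¹ < 1 := inv_lt_one_of_one_lt₀ hx
  have hg : ∑' n : ℕ, x⁻¹ ^ n = (1 - x⁻¹)⁻¹ := tsum_geometric_of_lt_one h0 h1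
  calc ∑' n : ℕ, x⁻¹ ^ (n + 1) = ∑' n : ℕ, x⁻¹ ^ n * x⁻¹ := by
        simp [pow_succ]
    _ = (∑' n : ℕ, x⁻¹ ^ n) * x⁻¹ := tsum_mul_right
    _ = (1 - x⁻¹)⁻¹ * x⁻¹ := by rw [hg]
    _ = (x - 1)⁻¹ := by
        rw [← mul_inv, eq_comm, inv_eq_iff_eq_inv, inv_inv]
        field_simp

lemma aux_summable_geo (x : ℝ) (hx : 1 < x) : Summable (fun n : ℕ => x⁻¹ ^ (n + 1)) := by
  have h0 : (0:ℝ) ≤ x⁻¹ := by positivity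
  have h1 : x⁻¹ < 1 := inv_lt_one_of_one_lt₀ hx
  have := (summable_geometric_of_lt_one h0 h1).mul_right x⁻¹
  exact this.congr (fun n => (pow_succ _ _).symm)

lemma aux_summable_s10 (c : ℕ) (s : ℕ → ℕ) (hs : ∀ n, 1 ≤ n → s n ≤ c) (x : ℝ) (hx : 1 < x) :
    Summable (fun n : ℕ => (s (n + 1) : ℝ) * x⁻¹ ^ (n + 1)) := by
  have hgeo := (aux_summable_geo x hx).mul_left (c : ℝ)
  refine Summable.of_nonneg_of_le (fun n => by positivity) (fun n => ?_) hgeo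
  have h1 : (s (n+1) : ℝ) ≤ (c : ℝ) := by exact_mod_cast hs (n+1) (Nat.le_add_left 1 n)
  have h2 : (0:ℝ) ≤ x⁻¹ ^ (n+1) := by positivity
  exact mul_le_mul_of_nonneg_right h1 h2


lemma aux_anti (c : ℕ) (s : ℕ → ℕ) (hs : ∀ n, 1 ≤ n → 1 ≤ s n ∧ s n ≤ c)
    (x y : ℝ) (hx : 1 < x) (hxy : x < y) : FF s y < FF s x := by
  have hy : 1 < y := lt_trans hx hxy
  have hx0 : (0:ℝ) < x := lt_trans one_pos hx
  have hy0 : (0:ℝ) < y := lt_trans one_pos hy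
  have hyx : y⁻¹ < x⁻¹ := by
    exact inv_strictAnti₀ hx0 hxy
  have hle : ∀ n : ℕ, (s (n+1) : ℝ) * y⁻¹ ^ (n+1) ≤ (s (n+1) : ℝ) * x⁻¹ ^ (n+1) := by
    intro n
    have : y⁻¹ ^ (n+1) ≤ x⁻¹ ^ (n+1) :=
      pow_le_pow_left₀ (by positivity) hyx.le _
    exact mul_le_mul_of_nonneg_left this (by positivity)
  have hlt : (s (0+1) : ℝ) * y⁻¹ ^ (0+1) < (s (0+1) : ℝ) * x⁻¹ ^ (0+1) := by
    have hs1 : (1:ℝ) ≤ (s 1 : ℝ) := by exact_mod_cast (hs 1 le_rfl).1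
    have : y⁻¹ ^ 1 < x⁻¹ ^ 1 := by simpa using hyx
    exact mul_lt_mul_of_pos_left (by simpa using hyx) (lt_of_lt_of_le one_pos hs1)
  exact Summable.tsum_lt_tsum hle hlt (aux_summable_s10 c s (fun n h => (hs n h).2) y hy)
    (aux_summable_s10 c s (fun n h => (hs n h).2) x hx)

lemma aux_ge_one (c : ℕ) (s : ℕ → ℕ) (hs : ∀ n, 1 ≤ n → 1 ≤ s n ∧ s n ≤ c)
    (x : ℝ) (hx : 1 < x) : (x - 1)⁻¹ ≤ FF s x := by
  rw [← aux_geo x hx]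
  refine Summable.tsum_le_tsum (fun n => ?_) (aux_summable_geo x hx)
    (aux_summable_s10 c s (fun n h => (hs n h).2) x hx)
  have h1 : (1:ℝ) ≤ (s (n+1) : ℝ) := by exact_mod_cast (hs (n+1) (Nat.le_add_left 1 n)).1
  nlinarith [pow_nonneg (inv_nonneg.mpr (le_of_lt (lt_trans one_pos hx))) (n+1)]

lemma aux_le (c : ℕ) (s : ℕ → ℕ) (hs : ∀ n, 1 ≤ n → 1 ≤ s n ∧ s n ≤ c)
    (x : ℝ) (hx : 1 < x) : FF s x ≤ (c : ℝ) * (x - 1)⁻¹ := by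
  have : (c:ℝ) * (x-1)⁻¹ = ∑' n : ℕ, (c:ℝ) * x⁻¹ ^ (n+1) := by
    rw [tsum_mul_left, aux_geo x hx]
  rw [this]
  refine Summable.tsum_le_tsum (fun n => ?_)
    (aux_summable_s10 c s (fun n h => (hs n h).2) x hx)
    ((aux_summable_geo x hx).mul_left _)
  have h1 : (s (n+1) : ℝ) ≤ (c:ℝ) := by exact_mod_cast (hs (n+1) (Nat.le_add_left 1 n)).2
  have h2 : (0:ℝ) ≤ x⁻¹ ^ (n+1) := by positivity
  exact mul_le_mul_of_nonneg_right h1 h2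

lemma aux_lower (c : ℕ) (s : ℕ → ℕ) (hs : ∀ n, 1 ≤ n → 1 ≤ s n ∧ s n ≤ c)
    (x : ℝ) (hx : 1 < x) (hfx : FF s x = 1) : 2 ≤ x := by
  have h := aux_ge_one c s hs x hx
  rw [hfx] at h
  have hx1 : 0 < x - 1 := by linarith
  have h2 : 1 ≤ x - 1 := by
    by_contra hc
    push_neg at hc
    have : 1 < (x-1)⁻¹ := by
      rw [lt_inv_comm₀ one_pos hx1]
      simpa using hc
    linarith
  linarith


lemma aux_cont (c : ℕ) (s : ℕ → ℕ) (hs : ∀ n, 1 ≤ n → s n ≤ c) :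
    ContinuousOn (FF s) (Set.Ici (2:ℝ)) := by
  have hu : Summable (fun n : ℕ => (c : ℝ) * (2:ℝ)⁻¹ ^ (n+1)) := by
    have h0 : (0:ℝ) ≤ (2:ℝ)⁻¹ := by norm_num
    have h1 : (2:ℝ)⁻¹ < 1 := by norm_num
    exact (((summable_geometric_of_lt_one h0 h1).mul_right _).congr
      (fun n => (pow_succ _ _).symm)).mul_left _
  have hbound : ∀ (n : ℕ) (x : ℝ), x ∈ Set.Ici (2:ℝ) →
      ‖(s (n+1) : ℝ) * x⁻¹ ^ (n+1)‖ ≤ (c : ℝ) * (2:ℝ)⁻¹ ^ (n+1) := by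
    intro n x hx
    simp only [Set.mem_Ici] at hx
    have hx0 : (0:ℝ) < x := by linarith
    have hinv : x⁻¹ ≤ (2:ℝ)⁻¹ := by
      rw [inv_le_inv₀ hx0 (by norm_num)]; exact hx
    have hinv0 : (0:ℝ) ≤ x⁻¹ := by positivity
    rw [norm_mul, norm_pow, Real.norm_eq_abs, Real.norm_eq_abs,
      abs_of_nonneg hinv0, abs_of_nonneg (by positivity : (0:ℝ) ≤ (s (n+1):ℝ))]
    have h1 : (s (n+1) : ℝ) ≤ (c : ℝ) := by exact_mod_cast hs (n+1) (Nat.le_add_left 1 n)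
    have h2 : x⁻¹ ^ (n+1) ≤ (2:ℝ)⁻¹ ^ (n+1) := pow_le_pow_left₀ hinv0 hinv _
    exact mul_le_mul h1 h2 (by positivity) (by positivity)
  have huni := tendstoUniformlyOn_tsum hu hbound
  refine huni.continuousOn (Filter.Eventually.frequently (Filter.Eventually.of_forall (fun F => ?_)))
  refine continuousOn_finset_sum F (fun n _ => ?_)
  refine ContinuousOn.mul continuousOn_const ?_
  refine ContinuousOn.pow ?_ _
  have hid : ContinuousOn (fun x : ℝ => x) (Set.Ici (2:ℝ)) := continuousOn_id
  exact ContinuousOn.inv₀ hid (fun x hx => by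
    simp only [Set.mem_Ici] at hx
    intro h; linarith)


lemma aux_tail (c : ℕ) (s s' : ℕ → ℕ) (hs : ∀ n, 1 ≤ n → s n ≤ c) (hs' : ∀ n, 1 ≤ n → s' n ≤ c)
    (N : ℕ) (hagree : ∀ n, 1 ≤ n → n ≤ N → s n = s' n)
    (x : ℝ) (hx : 2 ≤ x) : |FF s x - FF s' x| ≤ 2 * (c:ℝ) * (2:ℝ)⁻¹ ^ N := by
  have hx1 : (1:ℝ) < x := by linarith
  have hx0 : (0:ℝ) < x := by linarith
  have hxi : x⁻¹ ≤ (2:ℝ)⁻¹ := by rw [inv_le_inv₀ hx0 (by norm_num)]; exact hx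
  have hxi0 : (0:ℝ) ≤ x⁻¹ := by positivity
  set f : ℕ → ℝ := fun n => ((s (n+1) : ℝ) - (s' (n+1) : ℝ)) * x⁻¹ ^ (n+1) with hf
  have hsum1 := aux_summable_s10 c s hs x hx1
  have hsum2 := aux_summable_s10 c s' hs' x hx1
  have hsumf : Summable f := by
    have := hsum1.sub hsum2
    refine this.congr (fun n => ?_)
    simp [hf, sub_mul]
  have hdiff : FF s x - FF s' x = ∑' n, f n := by
    rw [FF, FF, ← Summable.tsum_sub hsum1 hsum2]
    congr 1; funext n; simp [hf, sub_mul]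
  have hzero : ∀ i ∈ Finset.range N, f i = 0 := by
    intro i hi
    simp only [Finset.mem_range] at hi
    have : s (i+1) = s' (i+1) := hagree (i+1) (Nat.le_add_left 1 i) (by omega)
    simp [hf, this]
  have hsplit := (Summable.sum_add_tsum_nat_add N hsumf).symm
  rw [Finset.sum_eq_zero hzero, zero_add] at hsplit
  rw [hdiff, hsplit]
  have hb : ∀ n : ℕ, ‖f (n + N)‖ ≤ 2 * (c:ℝ) * ((2:ℝ)⁻¹ ^ N * (2:ℝ)⁻¹ ^ (n+1)) := by
    intro n
    have h1 : |(s (n+N+1) : ℝ) - (s' (n+N+1) : ℝ)| ≤ 2 * (c:ℝ) := by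
      have a1 : (s (n+N+1) : ℝ) ≤ c := by exact_mod_cast hs _ (Nat.le_add_left 1 _)
      have a2 : (s' (n+N+1) : ℝ) ≤ c := by exact_mod_cast hs' _ (Nat.le_add_left 1 _)
      have a3 : (0:ℝ) ≤ (s (n+N+1) : ℝ) := by positivity
      have a4 : (0:ℝ) ≤ (s' (n+N+1) : ℝ) := by positivity
      rw [abs_le]; constructor <;> linarith
    have h2 : x⁻¹ ^ (n+N+1) ≤ (2:ℝ)⁻¹ ^ (n+N+1) := pow_le_pow_left₀ hxi0 hxi _
    have h3 : ((2:ℝ)⁻¹ : ℝ) ^ (n+N+1) = (2:ℝ)⁻¹ ^ N * (2:ℝ)⁻¹ ^ (n+1) := by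
      rw [← pow_add]; ring_nf
    calc ‖f (n + N)‖ = |(s (n+N+1) : ℝ) - (s' (n+N+1) : ℝ)| * x⁻¹ ^ (n+N+1) := by
          show ‖((s (n+N+1) : ℝ) - (s' (n+N+1) : ℝ)) * x⁻¹ ^ (n+N+1)‖ = _
          rw [Real.norm_eq_abs, abs_mul, abs_of_nonneg (pow_nonneg hxi0 _)]
      _ ≤ 2 * (c:ℝ) * (2:ℝ)⁻¹ ^ (n+N+1) := by
          apply mul_le_mul h1 h2 (by positivity) (by positivity)
      _ = 2 * (c:ℝ) * ((2:ℝ)⁻¹ ^ N * (2:ℝ)⁻¹ ^ (n+1)) := by rw [h3]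
  have hu : Summable (fun n : ℕ => 2 * (c:ℝ) * ((2:ℝ)⁻¹ ^ N * (2:ℝ)⁻¹ ^ (n+1))) := by
    exact ((aux_summable_geo 2 (by norm_num)).mul_left _).mul_left _
  calc |∑' n, f (n + N)| ≤ ∑' n, ‖f (n + N)‖ := by
        exact norm_tsum_le_tsum_norm ((hsumf.comp_injective (add_left_injective N)).norm)
    _ ≤ ∑' n : ℕ, 2 * (c:ℝ) * ((2:ℝ)⁻¹ ^ N * (2:ℝ)⁻¹ ^ (n+1)) := by
        exact Summable.tsum_le_tsum hb ((hsumf.comp_injective (add_left_injective N)).norm) hu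
    _ = 2 * (c:ℝ) * ((2:ℝ)⁻¹ ^ N * ∑' n : ℕ, (2:ℝ)⁻¹ ^ (n+1)) := by
        rw [tsum_mul_left, tsum_mul_left]
    _ ≤ 2 * (c:ℝ) * (2:ℝ)⁻¹ ^ N := by
        rw [aux_geo 2 (by norm_num)]
        norm_num


lemma aux_single (c : ℕ) (s : ℕ → ℕ) (hs : ∀ n, 1 ≤ n → s n ≤ c)
    (k : ℕ) (hk : 1 ≤ k) (v : ℕ) (hv : v ≤ c) (hne : v ≠ s k)
    (x : ℝ) (hx : 2 ≤ x) : FF (Function.update s k v) x ≠ FF s x := by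
  have hx1 : (1:ℝ) < x := by linarith
  have hx0 : (0:ℝ) < x := by linarith
  set s' := Function.update s k v with hs'
  have hs'le : ∀ n, 1 ≤ n → s' n ≤ c := by
    intro n hn
    by_cases h : n = k
    · subst h; simp [hs', Function.update_self]; exact hv
    · simp [hs', Function.update_of_ne h]; exact hs n hn
  have hsum1 := aux_summable_s10 c s' hs'le x hx1
  have hsum2 := aux_summable_s10 c s hs x hx1
  intro hcontra
  have hdiff : (0:ℝ) = ∑' n : ℕ, (((s' (n+1) : ℝ) - (s (n+1) : ℝ)) * x⁻¹ ^ (n+1)) := by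
    have : FF s' x - FF s x = 0 := by rw [hcontra]; ring
    rw [← this, FF, FF, ← Summable.tsum_sub hsum1 hsum2]
    congr 1; funext n; ring
  have hsingle : ∑' n : ℕ, (((s' (n+1) : ℝ) - (s (n+1) : ℝ)) * x⁻¹ ^ (n+1))
      = ((s' k : ℝ) - (s k : ℝ)) * x⁻¹ ^ k := by
    have hkey := tsum_eq_single (L := SummationFilter.unconditional ℕ) (f := fun n : ℕ => ((s' (n+1) : ℝ) - (s (n+1) : ℝ)) * x⁻¹ ^ (n+1)) (k - 1) ?_
    · rw [hkey]
      have : k - 1 + 1 = k := Nat.succ_pred_eq_of_pos hk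
      rw [this]
    · intro b hb
      have hbk : b + 1 ≠ k := by omega
      have : s' (b+1) = s (b+1) := Function.update_of_ne hbk _ _
      simp [this]
  rw [hsingle] at hdiff
  have h1 : s' k = v := Function.update_self _ _ _
  have h2 : (s' k : ℝ) - (s k : ℝ) ≠ 0 := by
    rw [h1]
    intro h
    apply hne
    exact_mod_cast sub_eq_zero.mp h
  have h3 : x⁻¹ ^ k ≠ 0 := by positivity
  exact (mul_ne_zero h2 h3) hdiff.symm

lemma aux_root (c : ℕ) (hc : 1 ≤ c) (s : ℕ → ℕ) (hs : ∀ n, 1 ≤ n → 1 ≤ s n ∧ s n ≤ c) :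
    ∃ x : ℝ, 2 ≤ x ∧ FF s x = 1 := by
  have hc1 : (1:ℝ) ≤ (c:ℝ) := by exact_mod_cast hc
  have h2c : (2:ℝ) ≤ (c:ℝ) + 1 := by linarith
  have hcont : ContinuousOn (FF s) (Set.Icc (2:ℝ) ((c:ℝ)+1)) :=
    (aux_cont c s (fun n hn => (hs n hn).2)).mono (Set.Icc_subset_Ici_self)
  have h1 : (1:ℝ) ≤ FF s 2 := by
    have := aux_ge_one c s hs 2 (by norm_num)
    norm_num at this
    exact this
  have h2 : FF s ((c:ℝ)+1) ≤ 1 := by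
    have := aux_le c s hs ((c:ℝ)+1) (by linarith)
    have hcc : ((c:ℝ)+1-1)⁻¹ = (c:ℝ)⁻¹ := by norm_num
    rw [hcc] at this
    have : FF s ((c:ℝ)+1) ≤ (c:ℝ) * (c:ℝ)⁻¹ := this
    rwa [mul_inv_cancel₀ (by linarith)] at this
  have hmem : (1:ℝ) ∈ Set.Icc (FF s ((c:ℝ)+1)) (FF s 2) := ⟨h2, h1⟩
  have := intermediate_value_Icc' h2c hcont hmem
  obtain ⟨x, hx, hfx⟩ := this
  exact ⟨x, hx.1, hfx⟩


lemma aux_closed (c : ℕ) (r t : ℕ → ℕ)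
    (hr : ∀ n, 1 ≤ n → 1 ≤ r n ∧ r n ≤ c)
    (ht : ∀ n, 1 ≤ n → 1 ≤ t n ∧ t n ≤ c)
    (hrt : ∀ n, 1 ≤ n → r n ≤ t n)
    (hinf : ∀ N : ℕ, ∃ n, N ≤ n ∧ 1 ≤ n ∧ r n ≠ t n) :
    IsClosed {x : ℝ | ∃ s : ℕ → ℕ,
      (∀ n, 1 ≤ n → r n ≤ s n ∧ s n ≤ t n) ∧
      1 < x ∧ ∑' n : ℕ, (s (n + 1) : ℝ) * x⁻¹ ^ (n + 1) = 1} := by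
  set S := {x : ℝ | ∃ s : ℕ → ℕ,
      (∀ n, 1 ≤ n → r n ≤ s n ∧ s n ≤ t n) ∧
      1 < x ∧ ∑' n : ℕ, (s (n + 1) : ℝ) * x⁻¹ ^ (n + 1) = 1} with hS
  -- bounds helper
  have hbounds : ∀ s : ℕ → ℕ, (∀ n, 1 ≤ n → r n ≤ s n ∧ s n ≤ t n) →
      ∀ n, 1 ≤ n → 1 ≤ s n ∧ s n ≤ c := by
    intro s hsb n hn
    exact ⟨le_trans (hr n hn).1 (hsb n hn).1, le_trans (hsb n hn).2 (ht n hn).2⟩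
  apply IsSeqClosed.isClosed
  intro u x hmem htend
  simp only [hS, Set.mem_setOf_eq] at hmem ⊢
  choose σ hσb hσ1 hσ2 using hmem
  -- normalize: set value at 0 to 0
  set τ : ℕ → ℕ → ℕ := fun k => fun n => if n = 0 then 0 else σ k n with hτ
  have hτeq : ∀ k x', FF (τ k) x' = FF (σ k) x' := by
    intro k x'
    apply tsum_congr
    intro n
    simp [hτ]
  have hτb : ∀ k n, 1 ≤ n → r n ≤ τ k n ∧ τ k n ≤ t n := by
    intro k n hn
    simp only [hτ]
    rw [if_neg (by omega)]
    exact hσb k n hn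
  have hτc : ∀ k, ∀ n, 1 ≤ n → 1 ≤ τ k n ∧ τ k n ≤ c := fun k => hbounds _ (hτb k)
  -- compactness
  have hK : IsCompact {f : ℕ → ℕ | ∀ n, f n ≤ c} := by
    have : {f : ℕ → ℕ | ∀ n, f n ≤ c} = Set.univ.pi (fun _ : ℕ => Set.Iic c) := by
      ext f; simp [Set.mem_univ_pi, Set.mem_Iic, Pi.le_def]
    rw [this]
    exact isCompact_univ_pi (fun i => (Set.finite_Iic c).isCompact)
  have hτK : ∀ k, τ k ∈ {f : ℕ → ℕ | ∀ n, f n ≤ c} := by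
    intro k n
    simp only [Set.mem_setOf_eq, hτ]
    by_cases h : n = 0
    · simp [h]
    · rw [if_neg h]
      exact (hbounds _ (hσb k) n (by omega)).2
  obtain ⟨a, haK, φ, hφ, hconv⟩ := hK.tendsto_subseq hτK
  -- pointwise eventual equality
  have hpt : ∀ n, ∀ᶠ j in atTop, τ (φ j) n = a n := by
    intro n
    have h1 : Tendsto (fun j => (τ ∘ φ) j n) atTop (𝓝 (a n)) := tendsto_pi_nhds.mp hconv n
    rw [nhds_discrete ℕ] at h1
    exact tendsto_pure.mp h1
  -- a satisfies bounds
  have hab : ∀ n, 1 ≤ n → r n ≤ a n ∧ a n ≤ t n := by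
    intro n hn
    obtain ⟨j, hj⟩ := (hpt n).exists
    rw [← hj]
    exact hτb (φ j) n hn
  have hac : ∀ n, 1 ≤ n → 1 ≤ a n ∧ a n ≤ c := hbounds a hab
  -- u k ≥ 2
  have hu2 : ∀ k, 2 ≤ u k := by
    intro k
    exact aux_lower c (σ k) (hbounds _ (hσb k)) (u k) (hσ1 k) (hσ2 k)
  have hx2 : 2 ≤ x := ge_of_tendsto htend (Filter.Eventually.of_forall hu2)
  -- subsequence of u tends to x
  have huφ : Tendsto (u ∘ φ) atTop (𝓝 x) := htend.comp hφ.tendsto_atTop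
  -- L1: continuity
  have hL1 : Tendsto (fun j => FF a (u (φ j))) atTop (𝓝 (FF a x)) := by
    have hc : ContinuousWithinAt (FF a) (Set.Ici (2:ℝ)) x :=
      (aux_cont c a (fun n hn => (hac n hn).2)).continuousWithinAt (by exact hx2)
    apply hc.tendsto.comp
    rw [tendsto_nhdsWithin_iff]
    exact ⟨huφ, Filter.Eventually.of_forall (fun j => hu2 (φ j))⟩
  -- L2: value tends to 1
  have hL2 : Tendsto (fun j => FF a (u (φ j))) atTop (𝓝 1) := by
    rw [Metric.tendsto_atTop]
    intro ε hε
    -- choose N with 2c(1/2)^N < ε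
    have htendN : Tendsto (fun N : ℕ => 2 * (c:ℝ) * (2:ℝ)⁻¹ ^ N) atTop (𝓝 0) := by
      have := tendsto_pow_atTop_nhds_zero_of_lt_one (by norm_num : (0:ℝ) ≤ 2⁻¹) (by norm_num : (2:ℝ)⁻¹ < 1)
      simpa using this.const_mul (2 * (c:ℝ))
    obtain ⟨N, hN⟩ := (htendN.eventually (gt_mem_nhds hε)).exists
    -- eventual agreement on range N+1
    have hagree : ∀ᶠ j in atTop, ∀ n ∈ Finset.range (N+1), τ (φ j) n = a n := by
      rw [Filter.eventually_all_finset]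
      intro n _
      exact hpt n
    obtain ⟨J, hJ⟩ := Filter.eventually_atTop.mp hagree
    refine ⟨J, fun j hj => ?_⟩
    have hag := hJ j hj
    have h1 : FF (τ (φ j)) (u (φ j)) = 1 := by rw [hτeq]; exact hσ2 (φ j)
    have h2 : |FF a (u (φ j)) - FF (τ (φ j)) (u (φ j))| ≤ 2 * (c:ℝ) * (2:ℝ)⁻¹ ^ N := by
      apply aux_tail c a (τ (φ j)) (fun n hn => (hac n hn).2) (fun n hn => (hτc (φ j) n hn).2)
        N _ (u (φ j)) (hu2 (φ j))
      intro n hn hnN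
      exact (hag n (Finset.mem_range.mpr (by omega))).symm
    rw [h1] at h2
    rw [Real.dist_eq]
    exact lt_of_le_of_lt h2 hN
  have hfa : FF a x = 1 := tendsto_nhds_unique hL1 hL2
  exact ⟨a, hab, by linarith, hfa⟩


lemma aux_preperfect (c : ℕ) (r t : ℕ → ℕ)
    (hr : ∀ n, 1 ≤ n → 1 ≤ r n ∧ r n ≤ c)
    (ht : ∀ n, 1 ≤ n → 1 ≤ t n ∧ t n ≤ c)
    (hrt : ∀ n, 1 ≤ n → r n ≤ t n)
    (hinf : ∀ N : ℕ, ∃ n, N ≤ n ∧ 1 ≤ n ∧ r n ≠ t n) :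
    Preperfect {x : ℝ | ∃ s : ℕ → ℕ,
      (∀ n, 1 ≤ n → r n ≤ s n ∧ s n ≤ t n) ∧
      1 < x ∧ ∑' n : ℕ, (s (n + 1) : ℝ) * x⁻¹ ^ (n + 1) = 1} := by
  set S := {x : ℝ | ∃ s : ℕ → ℕ,
      (∀ n, 1 ≤ n → r n ≤ s n ∧ s n ≤ t n) ∧
      1 < x ∧ ∑' n : ℕ, (s (n + 1) : ℝ) * x⁻¹ ^ (n + 1) = 1} with hS
  have hbounds : ∀ s : ℕ → ℕ, (∀ n, 1 ≤ n → r n ≤ s n ∧ s n ≤ t n) →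
      ∀ n, 1 ≤ n → 1 ≤ s n ∧ s n ≤ c := by
    intro s hsb n hn
    exact ⟨le_trans (hr n hn).1 (hsb n hn).1, le_trans (hsb n hn).2 (ht n hn).2⟩
  have hc1 : 1 ≤ c := by
    obtain ⟨n, _, hn1, _⟩ := hinf 0
    exact le_trans (hr n hn1).1 (hr n hn1).2
  intro x hx
  obtain ⟨s, hsb, hx1, hfs⟩ := hx
  have hsc := hbounds s hsb
  have hfs' : FF s x = 1 := hfs
  have hx2 : 2 ≤ x := aux_lower c s hsc x hx1 hfs'
  rw [accPt_iff_nhds]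
  intro U hU
  obtain ⟨ε, hε, hball⟩ := Metric.mem_nhds_iff.mp hU
  -- choose ε' with 0 < ε' < ε and x - ε' > 1
  set ε' : ℝ := min (ε/2) ((x-1)/2) with hε'
  have hε'pos : 0 < ε' := by
    apply lt_min (by linarith) (by linarith)
  have hε'lt : ε' < ε := lt_of_le_of_lt (min_le_left _ _) (by linarith)
  have hxε1 : 1 < x - ε' := by
    have : ε' ≤ (x-1)/2 := min_le_right _ _
    linarith
  -- δ
  have hlt1 : FF s (x + ε') < 1 := by
    rw [← hfs']; exact aux_anti c s hsc x (x + ε') hx1 (by linarith)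
  have hgt1 : 1 < FF s (x - ε') := by
    rw [← hfs']; exact aux_anti c s hsc (x - ε') x hxε1 (by linarith)
  set δ : ℝ := min (1 - FF s (x + ε')) (FF s (x - ε') - 1) with hδ
  have hδpos : 0 < δ := lt_min (by linarith) (by linarith)
  -- pick m with 2c(1/2)^m < δ
  have htendN : Tendsto (fun N : ℕ => 2 * (c:ℝ) * (2:ℝ)⁻¹ ^ N) atTop (𝓝 0) := by
    have := tendsto_pow_atTop_nhds_zero_of_lt_one (by norm_num : (0:ℝ) ≤ 2⁻¹) (by norm_num : (2:ℝ)⁻¹ < 1)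
    simpa using this.const_mul (2 * (c:ℝ))
  obtain ⟨m, hm⟩ := (htendN.eventually (gt_mem_nhds hδpos)).exists
  -- pick n₀ ≥ m+1 with r n₀ ≠ t n₀
  obtain ⟨n₀, hn₀m, hn₀1, hn₀ne⟩ := hinf (m + 1)
  have hn₀lt : r n₀ < t n₀ := lt_of_le_of_ne (hrt n₀ hn₀1) hn₀ne
  set v : ℕ := if s n₀ = r n₀ then t n₀ else r n₀ with hv
  have hvne : v ≠ s n₀ := by
    by_cases h : s n₀ = r n₀ <;> simp [hv, h]
    · omega
    · exact fun hc => h hc.symm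
  have hvb : r n₀ ≤ v ∧ v ≤ t n₀ := by
    by_cases h : s n₀ = r n₀ <;> simp [hv, h]
    · exact le_of_lt hn₀lt
    · exact hrt n₀ hn₀1
  set s' : ℕ → ℕ := Function.update s n₀ v with hs''
  have hs'b : ∀ n, 1 ≤ n → r n ≤ s' n ∧ s' n ≤ t n := by
    intro n hn
    by_cases h : n = n₀
    · subst h; simp [hs'', Function.update_self]; exact hvb
    · simp [hs'', Function.update_of_ne h]; exact hsb n hn
  have hs'c := hbounds s' hs'b
  obtain ⟨y, hy2, hfy⟩ := aux_root c hc1 s' hs'c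
  -- y ∈ S
  have hyS : y ∈ S := ⟨s', hs'b, by linarith, hfy⟩
  -- y ≠ x
  have hyx : y ≠ x := by
    intro h
    subst h
    have := aux_single c s (fun n hn => (hsc n hn).2) n₀ hn₀1 v (le_trans hvb.2 (ht n₀ hn₀1).2) hvne y hx2
    rw [hfy, hfs'] at this
    exact this rfl
  -- |FF s y - 1| < δ
  have hagree : ∀ n, 1 ≤ n → n ≤ m → s n = s' n := by
    intro n hn hnm
    simp [hs'', Function.update_of_ne (by omega : n ≠ n₀)]
  have htail : |FF s y - 1| < δ := by
    have h := aux_tail c s s' (fun n hn => (hsc n hn).2) (fun n hn => (hs'c n hn).2) m hagree y hy2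
    rw [hfy] at h
    exact lt_of_le_of_lt h hm
  -- y close to x
  have hylt : y < x + ε' := by
    by_contra h
    push_neg at h
    have h1 : FF s y ≤ FF s (x + ε') := by
      rcases eq_or_lt_of_le h with h' | h'
      · rw [← h']
      · exact le_of_lt (aux_anti c s hsc (x + ε') y (by linarith) h')
    have h2 : δ ≤ 1 - FF s (x + ε') := min_le_left _ _
    have h3 : FF s y - 1 > -δ := by
      have := abs_lt.mp htail
      linarith [this.1]
    linarith
  have hygt : x - ε' < y := by
    by_contra h
    push_neg at h
    have h1 : FF s (x - ε') ≤ FF s y := by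
      rcases eq_or_lt_of_le h with h' | h'
      · rw [h']
      · exact le_of_lt (aux_anti c s hsc y (x - ε') (by linarith) h')
    have h2 : δ ≤ FF s (x - ε') - 1 := min_le_right _ _
    have h3 : FF s y - 1 < δ := by
      have := abs_lt.mp htail
      linarith [this.2]
    linarith
  refine ⟨y, ⟨hball ?_, hyS⟩, hyx⟩
  rw [Metric.mem_ball, Real.dist_eq, abs_lt]
  constructor <;> linarith


theorem stmt_10 (c : ℕ) (r t : ℕ → ℕ)
    (hr : ∀ n, 1 ≤ n → 1 ≤ r n ∧ r n ≤ c)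
    (ht : ∀ n, 1 ≤ n → 1 ≤ t n ∧ t n ≤ c)
    (hrt : ∀ n, 1 ≤ n → r n ≤ t n)
    (hinf : ∀ N : ℕ, ∃ n, N ≤ n ∧ 1 ≤ n ∧ r n ≠ t n) :
    Perfect {x : ℝ | ∃ s : ℕ → ℕ,
      (∀ n, 1 ≤ n → r n ≤ s n ∧ s n ≤ t n) ∧
      1 < x ∧ ∑' n : ℕ, (s (n + 1) : ℝ) * x⁻¹ ^ (n + 1) = 1} := by
  exact ⟨aux_closed c r t hr ht hrt hinf, aux_preperfect c r t hr ht hrt hinf⟩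
end

section
/- If C and D are sets of finite sequences (classes of permutations) whose counting sequences |C_n| and |D_n| satisfy |J_n| ≤ Σ_{k=0}^n (n choose k)|C_k||D_{n-k}| ≤ (n+1)|J_n| for a class J, and both lim |C_n|^{1/n} = g and lim |D_n|^{1/n} = h exist and are positive, then lim |J_n|^{1/n} exists and equals g + h. -/
open Filter Topology


lemma aux_upper (C : ℕ → ℕ) (g a : ℝ) (ha0 : 0 < a) (hga : g < a)
    (hC : Tendsto (fun n : ℕ => (C n : ℝ) ^ ((1 : ℝ) / n)) atTop (𝓝 g)) :
    ∃ M : ℝ, 1 ≤ M ∧ ∀ k, (C k : ℝ) ≤ M * a ^ k := by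
  have hev : ∀ᶠ k in atTop, (C k : ℝ) ^ ((1:ℝ)/k) < a :=
    hC.eventually_lt_const hga
  obtain ⟨N, hN⟩ := (hev.and (eventually_ge_atTop 1)).exists_forall_of_atTop
  set B : ℝ := ∑ j ∈ Finset.range N, (C j : ℝ) / a ^ j with hB
  refine ⟨max 1 B, le_max_left _ _, fun k => ?_⟩
  rcases lt_or_ge k N with hk | hk
  · have h1 : (C k : ℝ) / a ^ k ≤ B := by
      refine Finset.single_le_sum (f := fun j => (C j : ℝ) / a ^ j) ?_ (Finset.mem_range.2 hk)
      intro j _; positivity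
    have h2 : (C k : ℝ) ≤ B * a ^ k := by
      rwa [div_le_iff₀ (by positivity)] at h1
    exact h2.trans (by gcongr; exact le_max_right _ _)
  · obtain ⟨hlt, hk1⟩ := hN k hk
    have hkne : (k : ℝ) ≠ 0 := Nat.cast_ne_zero.2 (by omega)
    have hid : ((C k : ℝ) ^ ((1:ℝ)/k)) ^ k = (C k : ℝ) := by
      rw [← Real.rpow_natCast ((C k:ℝ) ^ ((1:ℝ)/k)) k, ← Real.rpow_mul (Nat.cast_nonneg _),
        one_div_mul_cancel hkne, Real.rpow_one]
    have : (C k : ℝ) ≤ a ^ k := by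
      rw [← hid]
      exact pow_le_pow_left₀ (Real.rpow_nonneg (Nat.cast_nonneg _) _) hlt.le k
    calc (C k : ℝ) ≤ a ^ k := this
      _ ≤ max 1 B * a ^ k := le_mul_of_one_le_left (by positivity) (le_max_left _ _)

lemma aux_lower_s12 (C : ℕ → ℕ) (g b : ℝ) (hb0 : 0 < b) (hbg : b < g)
    (hC : Tendsto (fun n : ℕ => (C n : ℝ) ^ ((1 : ℝ) / n)) atTop (𝓝 g)) :
    ∃ N : ℕ, ∀ k ≥ N, b ^ k ≤ (C k : ℝ) := by
  have hev : ∀ᶠ k in atTop, b < (C k : ℝ) ^ ((1:ℝ)/k) :=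
    hC.eventually_const_lt hbg
  obtain ⟨N, hN⟩ := (hev.and (eventually_ge_atTop 1)).exists_forall_of_atTop
  refine ⟨N, fun k hk => ?_⟩
  obtain ⟨hlt, hk1⟩ := hN k hk
  have hkne : (k : ℝ) ≠ 0 := Nat.cast_ne_zero.2 (by omega)
  have hid : ((C k : ℝ) ^ ((1:ℝ)/k)) ^ k = (C k : ℝ) := by
    rw [← Real.rpow_natCast ((C k:ℝ) ^ ((1:ℝ)/k)) k, ← Real.rpow_mul (Nat.cast_nonneg _),
      one_div_mul_cancel hkne, Real.rpow_one]
  rw [← hid]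
  exact pow_le_pow_left₀ hb0.le hlt.le k


lemma aux_geom (N : ℕ) (r : ℝ) (hr0 : 0 ≤ r) (hr : r < 1) :
    Tendsto (fun n : ℕ => (n : ℝ) ^ N * r ^ n) atTop (𝓝 0) := by
  have h := summable_norm_pow_mul_geometric_of_norm_lt_one (R := ℝ) N
    (r := r) (by rwa [Real.norm_eq_abs, abs_of_nonneg hr0])
  have := (Summable.of_norm h).tendsto_atTop_zero
  simpa using this

lemma aux_rpow_lt (x c : ℝ) (hx : 0 ≤ x) (hc : 0 < c) (n : ℕ) (hn : 1 ≤ n)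
    (h : x < c ^ n) : x ^ ((1:ℝ)/n) < c := by
  have hnne : (n : ℝ) ≠ 0 := Nat.cast_ne_zero.2 (by omega)
  have h2 := Real.rpow_lt_rpow hx h (z := (1:ℝ)/n) (by positivity)
  rwa [← Real.rpow_natCast c n, ← Real.rpow_mul hc.le,
    mul_one_div_cancel hnne, Real.rpow_one] at h2

lemma aux_rpow_gt (x c : ℝ) (hc : 0 < c) (n : ℕ) (hn : 1 ≤ n)
    (h : c ^ n < x) : c < x ^ ((1:ℝ)/n) := by
  have hnne : (n : ℝ) ≠ 0 := Nat.cast_ne_zero.2 (by omega)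
  have h2 := Real.rpow_lt_rpow (by positivity) h (z := (1:ℝ)/n) (by positivity)
  rwa [← Real.rpow_natCast c n, ← Real.rpow_mul hc.le,
    mul_one_div_cancel hnne, Real.rpow_one] at h2

set_option maxHeartbeats 1000000 in
theorem stmt_12 (C D J : ℕ → ℕ) (g h : ℝ) (hg : 0 < g) (hh : 0 < h)
    (hbound : ∀ n : ℕ,
      (J n : ℝ) ≤ ∑ k ∈ Finset.range (n + 1), (n.choose k : ℝ) * C k * D (n - k) ∧
      ∑ k ∈ Finset.range (n + 1), (n.choose k : ℝ) * C k * D (n - k) ≤ (n + 1 : ℝ) * J n)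
    (hC : Tendsto (fun n : ℕ => (C n : ℝ) ^ ((1 : ℝ) / n)) atTop (𝓝 g))
    (hD : Tendsto (fun n : ℕ => (D n : ℝ) ^ ((1 : ℝ) / n)) atTop (𝓝 h)) :
    Tendsto (fun n : ℕ => (J n : ℝ) ^ ((1 : ℝ) / n)) atTop (𝓝 (g + h)) := by
  rw [tendsto_order]
  constructor
  · intro c hc
    have hgh : 0 < g + h := by linarith
    -- replace c by a positive c'
    set c' := (max c 0 + (g + h)) / 2 with hc'def
    have hmax : max c 0 < g + h := by
      rcases le_or_gt c 0 with h0 | h0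
      · rw [max_eq_right h0]; exact hgh
      · rw [max_eq_left h0.le]; exact hc
    have hcc' : c < c' := lt_of_le_of_lt (le_max_left c 0) (by rw [hc'def]; linarith)
    have hc'0 : 0 < c' := lt_of_le_of_lt (le_max_right c 0) (by rw [hc'def]; linarith)
    have hc'gh : c' < g + h := by rw [hc'def]; linarith
    -- choose a < g, b < h with c' < a + b
    set δ := min (min g h) (g + h - c') / 3 with hδdef
    have hδ0 : 0 < δ := by
      rw [hδdef]
      have : 0 < min (min g h) (g + h - c') := lt_min (lt_min hg hh) (by linarith)
      linarith
    have hδg : δ < g := by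
      have h1 : min (min g h) (g + h - c') ≤ g := (min_le_left _ _).trans (min_le_left _ _)
      rw [hδdef]; linarith
    have hδh : δ < h := by
      have h1 : min (min g h) (g + h - c') ≤ h := (min_le_left _ _).trans (min_le_right _ _)
      rw [hδdef]; linarith
    have hδc : 2 * δ < g + h - c' := by
      have h1 : min (min g h) (g + h - c') ≤ g + h - c' := min_le_right _ _
      have h2 : 0 < min (min g h) (g + h - c') := lt_min (lt_min hg hh) (by linarith)
      rw [hδdef]; linarith
    set a := g - δ with hadef
    set b := h - δ with hbdef
    have ha0 : 0 < a := by rw [hadef]; linarith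
    have hb0 : 0 < b := by rw [hbdef]; linarith
    have hab : c' < a + b := by rw [hadef, hbdef]; linarith
    have hab0 : 0 < a + b := by linarith
    obtain ⟨N1, hN1⟩ := aux_lower_s12 C g a ha0 (by rw [hadef]; linarith) hC
    obtain ⟨N2, hN2⟩ := aux_lower_s12 D h b hb0 (by rw [hbdef]; linarith) hD
    set N := max N1 N2 with hNdef
    set R1 : ℝ := (max a 1) ^ N * (max b⁻¹ 1) ^ N with hR1
    set R2 : ℝ := (max b 1) ^ N * (max a⁻¹ 1) ^ N with hR2
    have hR10 : 0 < R1 := by positivity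
    have hR20 : 0 < R2 := by positivity
    -- eventual smallness of tails
    have hN1N : N1 ≤ N := le_max_left _ _
    have hN2N : N2 ≤ N := le_max_right _ _
    clear_value c' δ a b N R1 R2
    have hr1 : (0:ℝ) ≤ b / (a + b) := by positivity
    have hr1' : b / (a + b) < 1 := by rw [div_lt_one hab0]; linarith
    have hr2 : (0:ℝ) ≤ a / (a + b) := by positivity
    have hr2' : a / (a + b) < 1 := by rw [div_lt_one hab0]; linarith
    have htails : Tendsto (fun n : ℕ =>
        (N:ℝ) * R1 * ((n:ℝ) ^ N * (b/(a+b)) ^ n) + (N:ℝ) * R2 * ((n:ℝ) ^ N * (a/(a+b)) ^ n))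
        atTop (𝓝 0) := by
      have t1 := (aux_geom N _ hr1 hr1').const_mul ((N:ℝ) * R1)
      have t2 := (aux_geom N _ hr2 hr2').const_mul ((N:ℝ) * R2)
      simpa using t1.add t2
    have hEtail : ∀ᶠ n : ℕ in atTop,
        (N:ℝ) * ((n:ℝ) ^ N * R1 * b ^ n) + (N:ℝ) * ((n:ℝ) ^ N * R2 * a ^ n)
          < (1/2) * (a+b) ^ n := by
      filter_upwards [htails.eventually_lt_const (by norm_num : (0:ℝ) < 1/2)] with n hn
      have hpow : (0:ℝ) < (a+b) ^ n := by positivity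
      have key : (N:ℝ) * ((n:ℝ) ^ N * R1 * b ^ n) + (N:ℝ) * ((n:ℝ) ^ N * R2 * a ^ n)
          = ((N:ℝ) * R1 * ((n:ℝ) ^ N * (b/(a+b)) ^ n) + (N:ℝ) * R2 * ((n:ℝ) ^ N * (a/(a+b)) ^ n))
            * (a+b) ^ n := by
        rw [div_pow, div_pow]
        field_simp
      rw [key]
      exact mul_lt_mul_of_pos_right hn hpow
    have hEc : ∀ᶠ n : ℕ in atTop, ((n:ℝ) + 1) * c' ^ n < (1/2) * (a+b) ^ n := by
      have t : Tendsto (fun n : ℕ => ((n:ℝ) + 1) * (c'/(a+b)) ^ n) atTop (𝓝 0) := by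
        have t1 := aux_geom 1 (c'/(a+b)) (by positivity) (by rw [div_lt_one hab0]; linarith)
        have t2 := aux_geom 0 (c'/(a+b)) (by positivity) (by rw [div_lt_one hab0]; linarith)
        have := t1.add t2
        simp only [pow_one, pow_zero, one_mul, add_zero] at this
        convert this using 2 with n
        ring
      filter_upwards [t.eventually_lt_const (by norm_num : (0:ℝ) < 1/2)] with n hn
      have hpow : (0:ℝ) < (a+b) ^ n := by positivity
      have key : ((n:ℝ) + 1) * c' ^ n = (((n:ℝ) + 1) * (c'/(a+b)) ^ n) * (a+b) ^ n := by
        rw [div_pow, mul_assoc, div_mul_cancel₀ _ (ne_of_gt hpow)]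
      rw [key]
      exact mul_lt_mul_of_pos_right hn hpow
    -- main estimate
    filter_upwards [hEtail, hEc, eventually_ge_atTop (2 * N + 1)] with n htail hcn hn2N
    have hn1 : 1 ≤ n := by omega
    have hn0 : (1:ℝ) ≤ (n:ℝ) := by exact_mod_cast hn1
    -- split the binomial sum
    have hsplit : (a + b) ^ n =
        (∑ k ∈ Finset.Ico 0 N, a ^ k * b ^ (n-k) * (n.choose k : ℝ))
        + (∑ k ∈ Finset.Ico N (n - N + 1), a ^ k * b ^ (n-k) * (n.choose k : ℝ))
        + (∑ k ∈ Finset.Ico (n - N + 1) (n + 1), a ^ k * b ^ (n-k) * (n.choose k : ℝ)) := by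
      rw [add_pow, Finset.range_eq_Ico,
        ← Finset.sum_Ico_consecutive _ (Nat.zero_le N) (by omega : N ≤ n + 1),
        ← Finset.sum_Ico_consecutive _ (by omega : N ≤ n - N + 1) (by omega : n - N + 1 ≤ n + 1)]
      ring
    -- tail 1 bound
    have htail1 : (∑ k ∈ Finset.Ico 0 N, a ^ k * b ^ (n-k) * (n.choose k : ℝ))
        ≤ (N:ℝ) * ((n:ℝ) ^ N * R1 * b ^ n) := by
      have hterm : ∀ k ∈ Finset.Ico 0 N, a ^ k * b ^ (n-k) * (n.choose k : ℝ)
          ≤ (n:ℝ) ^ N * R1 * b ^ n := by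
        intro k hk
        rw [Finset.mem_Ico] at hk
        have hkN : k < N := hk.2
        have hkn : k ≤ n := by omega
        have h1 : (n.choose k : ℝ) ≤ (n:ℝ) ^ N := by
          calc (n.choose k : ℝ) ≤ (n:ℝ) ^ k := by exact_mod_cast Nat.choose_le_pow n k
            _ ≤ (n:ℝ) ^ N := pow_le_pow_right₀ hn0 (by omega)
        have h2 : a ^ k ≤ (max a 1) ^ N :=
          (pow_le_pow_left₀ ha0.le (le_max_left a 1) k).trans
            (pow_le_pow_right₀ (le_max_right a 1) (by omega))
        have h3 : b ^ (n-k) ≤ (max b⁻¹ 1) ^ N * b ^ n := by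
          rw [pow_sub₀ b hb0.ne' hkn]
          rw [← inv_pow]
          have : (b⁻¹) ^ k ≤ (max b⁻¹ 1) ^ N :=
            (pow_le_pow_left₀ (by positivity) (le_max_left _ 1) k).trans
              (pow_le_pow_right₀ (le_max_right _ 1) (by omega))
          calc b ^ n * (b⁻¹) ^ k ≤ b ^ n * (max b⁻¹ 1) ^ N := by
                exact mul_le_mul_of_nonneg_left this (by positivity)
            _ = (max b⁻¹ 1) ^ N * b ^ n := by ring
        calc a ^ k * b ^ (n-k) * (n.choose k : ℝ)
            ≤ (max a 1) ^ N * ((max b⁻¹ 1) ^ N * b ^ n) * ((n:ℝ) ^ N) := by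
              gcongr <;> positivity
          _ = (n:ℝ) ^ N * R1 * b ^ n := by rw [hR1]; ring
      calc (∑ k ∈ Finset.Ico 0 N, a ^ k * b ^ (n-k) * (n.choose k : ℝ))
          ≤ ∑ k ∈ Finset.Ico 0 N, (n:ℝ) ^ N * R1 * b ^ n := Finset.sum_le_sum hterm
        _ = (N:ℝ) * ((n:ℝ) ^ N * R1 * b ^ n) := by
            rw [Finset.sum_const, Nat.card_Ico, Nat.sub_zero, nsmul_eq_mul]
    -- tail 2 bound
    have htail2 : (∑ k ∈ Finset.Ico (n - N + 1) (n + 1), a ^ k * b ^ (n-k) * (n.choose k : ℝ))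
        ≤ (N:ℝ) * ((n:ℝ) ^ N * R2 * a ^ n) := by
      have hterm : ∀ k ∈ Finset.Ico (n - N + 1) (n + 1), a ^ k * b ^ (n-k) * (n.choose k : ℝ)
          ≤ (n:ℝ) ^ N * R2 * a ^ n := by
        intro k hk
        rw [Finset.mem_Ico] at hk
        have hkn : k ≤ n := by omega
        have hnkN : n - k ≤ N := by omega
        have h1 : (n.choose k : ℝ) ≤ (n:ℝ) ^ N := by
          rw [← Nat.choose_symm hkn]
          calc ((n.choose (n-k)) : ℝ) ≤ (n:ℝ) ^ (n-k) := by exact_mod_cast Nat.choose_le_pow n (n-k)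
            _ ≤ (n:ℝ) ^ N := pow_le_pow_right₀ hn0 hnkN
        have h2 : b ^ (n-k) ≤ (max b 1) ^ N :=
          (pow_le_pow_left₀ hb0.le (le_max_left b 1) _).trans
            (pow_le_pow_right₀ (le_max_right b 1) hnkN)
        have h3 : a ^ k ≤ (max a⁻¹ 1) ^ N * a ^ n := by
          have hkk : k = n - (n - k) := by omega
          rw [hkk, pow_sub₀ a ha0.ne' (by omega : n - k ≤ n), ← inv_pow]
          have : (a⁻¹) ^ (n-k) ≤ (max a⁻¹ 1) ^ N :=
            (pow_le_pow_left₀ (by positivity) (le_max_left _ 1) _).trans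
              (pow_le_pow_right₀ (le_max_right _ 1) hnkN)
          calc a ^ n * (a⁻¹) ^ (n-k) ≤ a ^ n * (max a⁻¹ 1) ^ N :=
                mul_le_mul_of_nonneg_left this (by positivity)
            _ = (max a⁻¹ 1) ^ N * a ^ n := by ring
        calc a ^ k * b ^ (n-k) * (n.choose k : ℝ)
            ≤ ((max a⁻¹ 1) ^ N * a ^ n) * ((max b 1) ^ N) * ((n:ℝ) ^ N) := by
              gcongr <;> positivity
          _ = (n:ℝ) ^ N * R2 * a ^ n := by rw [hR2]; ring
      calc (∑ k ∈ Finset.Ico (n - N + 1) (n + 1), a ^ k * b ^ (n-k) * (n.choose k : ℝ))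
          ≤ ∑ k ∈ Finset.Ico (n - N + 1) (n + 1), (n:ℝ) ^ N * R2 * a ^ n :=
            Finset.sum_le_sum hterm
        _ = (((n+1) - (n - N + 1) : ℕ) : ℝ) * ((n:ℝ) ^ N * R2 * a ^ n) := by
            rw [Finset.sum_const, Nat.card_Ico, nsmul_eq_mul]
        _ = (N:ℝ) * ((n:ℝ) ^ N * R2 * a ^ n) := by
            congr 2
            omega
    -- middle ≤ S n
    have hmid : (∑ k ∈ Finset.Ico N (n - N + 1), a ^ k * b ^ (n-k) * (n.choose k : ℝ))
        ≤ ∑ k ∈ Finset.range (n + 1), (n.choose k : ℝ) * C k * D (n - k) := by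
      have hsub : Finset.Ico N (n - N + 1) ⊆ Finset.range (n + 1) := by
        intro k hk
        rw [Finset.mem_Ico] at hk
        rw [Finset.mem_range]
        omega
      calc (∑ k ∈ Finset.Ico N (n - N + 1), a ^ k * b ^ (n-k) * (n.choose k : ℝ))
          ≤ ∑ k ∈ Finset.Ico N (n - N + 1), (n.choose k : ℝ) * C k * D (n - k) := by
            refine Finset.sum_le_sum fun k hk => ?_
            rw [Finset.mem_Ico] at hk
            have hCk : a ^ k ≤ (C k : ℝ) := hN1 k (le_trans hN1N hk.1)
            have hDk : b ^ (n-k) ≤ (D (n-k) : ℝ) := by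
              refine hN2 (n-k) ?_
              have : N ≤ n - k := by omega
              exact le_trans hN2N this
            calc a ^ k * b ^ (n-k) * (n.choose k : ℝ)
                = (n.choose k : ℝ) * a ^ k * b ^ (n-k) := by ring
              _ ≤ (n.choose k : ℝ) * C k * D (n - k) := by
                  gcongr <;> positivity
        _ ≤ ∑ k ∈ Finset.range (n + 1), (n.choose k : ℝ) * C k * D (n - k) := by
            refine Finset.sum_le_sum_of_subset_of_nonneg hsub fun k _ _ => by positivity
    -- combine
    have hShalf : (1/2) * (a+b) ^ n
        < ∑ k ∈ Finset.range (n + 1), (n.choose k : ℝ) * C k * D (n - k) := by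
      have := hsplit
      linarith [hsplit, htail1, htail2, hmid, htail]
    have hJn : c' ^ n < (J n : ℝ) := by
      have hJb := (hbound n).2
      have h1 : ((n:ℝ) + 1) * c' ^ n < ((n:ℝ) + 1) * (J n : ℝ) := by
        calc ((n:ℝ) + 1) * c' ^ n < (1/2) * (a+b) ^ n := hcn
          _ < _ := hShalf
          _ ≤ ((n:ℝ) + 1) * (J n : ℝ) := hJb
      have hn1' : (0:ℝ) < (n:ℝ) + 1 := by positivity
      exact lt_of_mul_lt_mul_left h1 hn1'.le
    exact lt_trans hcc' (aux_rpow_gt _ c' hc'0 n hn1 hJn)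
  · intro c hc
    have hgh : 0 < g + h := by linarith
    have hc0 : 0 < c := by linarith
    set δ := (c - (g + h)) / 3 with hδ
    have hδ0 : 0 < δ := by rw [hδ]; linarith
    set a := g + δ
    set b := h + δ
    have ha0 : 0 < a := by positivity
    have hb0 : 0 < b := by positivity
    have hab : a + b < c := by simp only [a, b, hδ]; ring_nf; linarith
    obtain ⟨M1, hM1, hCb⟩ := aux_upper C g a ha0 (by simp [a]; linarith) hC
    obtain ⟨M2, hM2, hDb⟩ := aux_upper D h b hb0 (by simp [b]; linarith) hD
    have hSb : ∀ n : ℕ, ∑ k ∈ Finset.range (n + 1), (n.choose k : ℝ) * C k * D (n - k)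
        ≤ M1 * M2 * (a + b) ^ n := by
      intro n
      have h1 : ∑ k ∈ Finset.range (n + 1), (n.choose k : ℝ) * C k * D (n - k)
          ≤ ∑ k ∈ Finset.range (n + 1), (n.choose k : ℝ) * (M1 * a ^ k) * (M2 * b ^ (n - k)) := by
        refine Finset.sum_le_sum fun k _ => ?_
        have h1 := hCb k
        have h2 := hDb (n - k)
        have : (0:ℝ) ≤ (n.choose k : ℝ) := Nat.cast_nonneg _
        gcongr <;> positivity
      refine h1.trans_eq ?_
      rw [add_pow, Finset.mul_sum]
      refine Finset.sum_congr rfl fun k _ => by ring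
    have hgeom : Tendsto (fun n : ℕ => M1 * M2 * ((a + b) / c) ^ n) atTop (𝓝 0) := by
      have := tendsto_pow_atTop_nhds_zero_of_lt_one (by positivity : (0:ℝ) ≤ (a+b)/c)
        (by rw [div_lt_one hc0]; exact hab)
      simpa using this.const_mul (M1 * M2)
    have hev : ∀ᶠ n : ℕ in atTop, M1 * M2 * ((a + b) / c) ^ n < 1 :=
      hgeom.eventually_lt_const one_pos
    filter_upwards [hev, eventually_ge_atTop 1] with n hn hn1
    have hJS := (hbound n).1
    have hlt : (J n : ℝ) < c ^ n := by
      have h2 : M1 * M2 * (a + b) ^ n = M1 * M2 * ((a + b) / c) ^ n * c ^ n := by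
        rw [div_pow]; field_simp
      have h3 : M1 * M2 * ((a + b) / c) ^ n * c ^ n < 1 * c ^ n :=
        mul_lt_mul_of_pos_right hn (by positivity)
      calc (J n : ℝ) ≤ M1 * M2 * (a + b) ^ n := hJS.trans (hSb n)
        _ < 1 * c ^ n := h2 ▸ h3
        _ = c ^ n := one_mul _
    exact aux_rpow_lt _ c (Nat.cast_nonneg _) hc0 n hn1 hlt
end

section
/- If (c_n) and (d_n) are sequences of nonnegative reals with lim c_n^{1/n} = g > 0 and lim d_n^{1/n} = h > 0, then the binomial convolution e_n = Σ_{k=0}^n (n choose k) c_k d_{n-k} satisfies lim e_n^{1/n} = g + h. -/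
open Filter Topology Finset
set_option maxHeartbeats 1600000

lemma aux_const {C : ℝ} (hC : 0 < C) :
    Tendsto (fun n : ℕ => C ^ ((1:ℝ)/n)) atTop (𝓝 1) := by
  have h1 : Tendsto (fun n : ℕ => Real.log C * ((1:ℝ)/n)) atTop (𝓝 0) := by
    simpa using (tendsto_one_div_atTop_nhds_zero_nat).const_mul (Real.log C)
  have h2 := (Real.continuous_exp.tendsto 0).comp h1
  simp only [Real.exp_zero] at h2
  refine h2.congr fun n => ?_
  rw [Function.comp_apply, Real.rpow_def_of_pos hC]

lemma aux_poly : Tendsto (fun n : ℕ => ((2*((n:ℝ)+1))) ^ ((1:ℝ)/n)) atTop (𝓝 1) := by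
  have hlog : Tendsto (fun x : ℝ => Real.log x / x) atTop (𝓝 0) := by
    simpa using Real.tendsto_pow_log_div_mul_add_atTop 1 0 1 one_ne_zero
  have hcomp : Tendsto (fun n : ℕ => (2*((n:ℝ)+1))) atTop atTop := by
    refine tendsto_atTop_mono (fun n => ?_) tendsto_natCast_atTop_atTop
    nlinarith [Nat.cast_nonneg (α := ℝ) n]
  have h1 : Tendsto (fun n : ℕ => Real.log (2*((n:ℝ)+1)) / (2*((n:ℝ)+1))) atTop (𝓝 0) :=
    hlog.comp hcomp
  have h2 : Tendsto (fun n : ℕ => (2*((n:ℝ)+1)) / n) atTop (𝓝 2) := by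
    have : Tendsto (fun n : ℕ => 2 + 2*((1:ℝ)/n)) atTop (𝓝 2) := by
      have := (tendsto_one_div_atTop_nhds_zero_nat).const_mul (2:ℝ)
      simpa using tendsto_const_nhds.add this
    refine this.congr' ?_
    filter_upwards [eventually_gt_atTop 0] with n hn
    have hn' : (n:ℝ) ≠ 0 := Nat.cast_ne_zero.2 hn.ne'
    field_simp
  have h3 : Tendsto (fun n : ℕ => Real.log (2*((n:ℝ)+1)) * ((1:ℝ)/n)) atTop (𝓝 0) := by
    have := h1.mul h2
    simp only [zero_mul] at this
    refine this.congr' ?_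
    filter_upwards [eventually_gt_atTop 0] with n hn
    have h2n : (2*((n:ℝ)+1)) ≠ 0 := by positivity
    field_simp
  have h4 := (Real.continuous_exp.tendsto 0).comp h3
  simp only [Real.exp_zero] at h4
  refine h4.congr fun n => ?_
  rw [Function.comp_apply, Real.rpow_def_of_pos (by positivity)]

lemma aux_root_pow {x : ℝ} (hx : 0 ≤ x) {n : ℕ} (hn : n ≠ 0) : (x ^ ((1:ℝ)/n)) ^ n = x := by
  rw [← Real.rpow_natCast (x ^ ((1:ℝ)/n)) n, ← Real.rpow_mul hx, one_div,
    inv_mul_cancel₀ (by exact_mod_cast hn), Real.rpow_one]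

lemma aux_upper_s13 {c : ℕ → ℝ} (hc0 : ∀ n, 0 ≤ c n) {g g' : ℝ} (hg' : 0 < g')
    (hc : Tendsto (fun n : ℕ => c n ^ ((1:ℝ)/n)) atTop (𝓝 g)) (hgg : g < g') :
    ∃ C : ℝ, 1 ≤ C ∧ ∀ n, c n ≤ C * g' ^ n := by
  have hev : ∀ᶠ n : ℕ in atTop, c n ^ ((1:ℝ)/n) < g' := hc.eventually_lt_const hgg
  obtain ⟨N, hN⟩ := hev.exists_forall_of_atTop
  refine ⟨1 + ∑ k ∈ range (N+1), c k / g' ^ k, le_add_of_nonneg_right (Finset.sum_nonneg fun k _ => div_nonneg (hc0 k) (by positivity)), fun n => ?_⟩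
  rcases le_or_gt n N with hn | hn
  · have h1 : c n / g' ^ n ≤ ∑ k ∈ range (N+1), c k / g' ^ k := by
      refine Finset.single_le_sum (f := fun k => c k / g' ^ k) (fun k _ => div_nonneg (hc0 k) (by positivity)) ?_
      exact mem_range.2 (Nat.lt_succ_of_le hn)
    have h2 : c n = (c n / g' ^ n) * g' ^ n := by field_simp
    rw [h2]
    have hp : (0:ℝ) < g' ^ n := by positivity
    nlinarith [hc0 n]
  · have hn0 : n ≠ 0 := by omega
    have h1 : c n ^ ((1:ℝ)/n) ≤ g' := (hN n (by omega)).le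
    have h2 : (c n ^ ((1:ℝ)/n)) ^ n ≤ g' ^ n :=
      pow_le_pow_left₀ (Real.rpow_nonneg (hc0 n) _) h1 n
    rw [aux_root_pow (hc0 n) hn0] at h2
    have hC : (0:ℝ) ≤ ∑ k ∈ range (N+1), c k / g' ^ k := Finset.sum_nonneg fun k _ => div_nonneg (hc0 k) (by positivity)
    nlinarith [pow_pos hg' n]

lemma aux_lower_s13 {c : ℕ → ℝ} (hc0 : ∀ n, 0 ≤ c n) {g g'' : ℝ} (hg'' : 0 < g'')
    (hc : Tendsto (fun n : ℕ => c n ^ ((1:ℝ)/n)) atTop (𝓝 g)) (hgg : g'' < g) :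
    ∃ N : ℕ, ∀ n ≥ N, g'' ^ n ≤ c n := by
  have hev : ∀ᶠ n : ℕ in atTop, g'' < c n ^ ((1:ℝ)/n) := hc.eventually_const_lt hgg
  obtain ⟨N, hN⟩ := hev.exists_forall_of_atTop
  refine ⟨N + 1, fun n hn => ?_⟩
  have hn0 : n ≠ 0 := by omega
  have h1 : g'' ≤ c n ^ ((1:ℝ)/n) := (hN n (by omega)).le
  have h2 : g'' ^ n ≤ (c n ^ ((1:ℝ)/n)) ^ n := pow_le_pow_left₀ hg''.le h1 n
  rwa [aux_root_pow (hc0 n) hn0] at h2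

lemma aux_pow_root {x : ℝ} (hx : 0 ≤ x) {n : ℕ} (hn : n ≠ 0) : (x ^ n : ℝ) ^ ((1:ℝ)/n) = x := by
  rw [← Real.rpow_natCast x n, ← Real.rpow_mul hx, mul_one_div,
    div_self (by exact_mod_cast hn), Real.rpow_one]

lemma aux_term_small {x y : ℝ} (hy : 0 < y) {N n k : ℕ} (hk : k < N) (hkn : k ≤ n) (hx : 0 ≤ x) :
    (n.choose k : ℝ) * x ^ k * y ^ (n-k) ≤
      ((n:ℝ)+1) ^ N * (max x 1) ^ N * (max y⁻¹ 1) ^ N * y ^ n := by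
  have h1 : (n.choose k : ℝ) ≤ ((n:ℝ)+1) ^ N := by
    calc (n.choose k : ℝ) ≤ (n:ℝ) ^ k := by exact_mod_cast Nat.choose_le_pow n k
      _ ≤ ((n:ℝ)+1) ^ k := pow_le_pow_left₀ (Nat.cast_nonneg n) (by linarith) k
      _ ≤ ((n:ℝ)+1) ^ N := pow_le_pow_right₀ (by linarith [Nat.cast_nonneg (α := ℝ) n]) hk.le
  have h2 : x ^ k ≤ (max x 1) ^ N := by
    calc x ^ k ≤ (max x 1) ^ k := pow_le_pow_left₀ hx (le_max_left _ _) k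
      _ ≤ (max x 1) ^ N := pow_le_pow_right₀ (le_max_right _ _) hk.le
  have h3 : (y⁻¹) ^ k ≤ (max y⁻¹ 1) ^ N := by
    calc (y⁻¹) ^ k ≤ (max y⁻¹ 1) ^ k := pow_le_pow_left₀ (by positivity) (le_max_left _ _) k
      _ ≤ (max y⁻¹ 1) ^ N := pow_le_pow_right₀ (le_max_right _ _) hk.le
  have hrw : y ^ (n-k) = (y⁻¹) ^ k * y ^ n := by
    rw [pow_sub₀ _ hy.ne' hkn, inv_pow]; ring
  rw [hrw]
  calc (n.choose k : ℝ) * x ^ k * ((y⁻¹) ^ k * y ^ n)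
      = ((n.choose k : ℝ) * x ^ k * (y⁻¹) ^ k) * y ^ n := by ring
    _ ≤ (((n:ℝ)+1) ^ N * (max x 1) ^ N * (max y⁻¹ 1) ^ N) * y ^ n := by
        refine mul_le_mul_of_nonneg_right ?_ (by positivity)
        exact mul_le_mul (mul_le_mul h1 h2 (by positivity) (by positivity)) h3
          (by positivity) (by positivity)

lemma aux_small {r : ℝ} (hr0 : 0 < r) (hr : r < 1) (N : ℕ) (K : ℝ) :
    Tendsto (fun n : ℕ => K * ((n:ℝ)+1) ^ N * r ^ n) atTop (𝓝 0) := by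
  have base := tendsto_pow_const_mul_const_pow_of_lt_one N hr0.le hr
  have comp : Tendsto (fun n : ℕ => ((n+1:ℕ):ℝ) ^ N * r ^ (n+1)) atTop (𝓝 0) :=
    base.comp (tendsto_add_atTop_nat 1)
  have := comp.const_mul (K/r)
  simp only [mul_zero] at this
  refine this.congr fun n => ?_
  push_cast
  field_simp
  ring

theorem stmt_13 (c d : ℕ → ℝ) (hc0 : ∀ n, 0 ≤ c n) (hd0 : ∀ n, 0 ≤ d n)
    (g h : ℝ) (hg : 0 < g) (hh : 0 < h)
    (hc : Tendsto (fun n : ℕ => c n ^ ((1 : ℝ) / n)) atTop (𝓝 g))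
    (hd : Tendsto (fun n : ℕ => d n ^ ((1 : ℝ) / n)) atTop (𝓝 h)) :
    Tendsto (fun n : ℕ =>
        (∑ k ∈ Finset.range (n + 1), (n.choose k : ℝ) * c k * d (n - k)) ^ ((1 : ℝ) / n))
      atTop (𝓝 (g + h)) := by
  have he0 : ∀ n : ℕ, (0:ℝ) ≤ ∑ k ∈ Finset.range (n + 1), (n.choose k : ℝ) * c k * d (n - k) :=
    fun n => Finset.sum_nonneg fun k _ =>
      mul_nonneg (mul_nonneg (Nat.cast_nonneg _) (hc0 k)) (hd0 (n - k))
  rw [tendsto_order]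
  constructor
  · intro b hb
    have hδ0 : 0 < min (g/2) (min (h/2) ((g+h-b)/3)) :=
      lt_min (by linarith) (lt_min (by linarith) (by linarith))
    set δ := min (g/2) (min (h/2) ((g+h-b)/3)) with hδdef
    have hδg : δ ≤ g/2 := min_le_left _ _
    have hδh : δ ≤ h/2 := (min_le_right _ _).trans (min_le_left _ _)
    have hδb : δ ≤ (g+h-b)/3 := (min_le_right _ _).trans (min_le_right _ _)
    set x := g - δ with hxdef
    set y := h - δ with hydef
    have hx : 0 < x := by simp only [hxdef]; linarith
    have hy : 0 < y := by simp only [hydef]; linarith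
    set s := x + y with hsdef
    have hs : 0 < s := by positivity
    have hbs : b < s := by simp only [hsdef, hxdef, hydef]; linarith
    obtain ⟨Nc, hNc⟩ := aux_lower_s13 hc0 hx hc (by simp only [hxdef]; linarith)
    obtain ⟨Nd, hNd⟩ := aux_lower_s13 hd0 hy hd (by simp only [hydef]; linarith)
    set N := max Nc Nd + 1 with hNdef
    set P := (max x 1) ^ N * (max y⁻¹ 1) ^ N with hPdef
    set Q := (max y 1) ^ N * (max x⁻¹ 1) ^ N with hQdef
    have hP : 0 < P := by positivity
    have hQ : 0 < Q := by positivity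
    have hys : y / s < 1 := by rw [div_lt_one hs]; linarith
    have hxs : x / s < 1 := by rw [div_lt_one hs]; linarith
    have t1 := (aux_small (by positivity) hys (N+1) P).eventually_lt_const
      (by norm_num : (0:ℝ) < 1/4)
    have t2 := (aux_small (by positivity) hxs (N+1) Q).eventually_lt_const
      (by norm_num : (0:ℝ) < 1/4)
    have hlim : Tendsto (fun n : ℕ => s / (2*((n:ℝ)+1)) ^ ((1:ℝ)/n)) atTop (𝓝 s) := by
      have := (tendsto_const_nhds (x := s)).div aux_poly one_ne_zero
      simp only [div_one] at this; exact this
    filter_upwards [eventually_ge_atTop (2*N+1), t1, t2, hlim.eventually_const_lt hbs]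
      with n hn2N ht1 ht2 hblt
    have hn0 : n ≠ 0 := by omega
    have hN1 : 1 ≤ N := by omega
    have hNn : N ≤ n - N := by omega
    have hsub : Finset.Icc N (n-N) ⊆ Finset.range (n+1) := by
      intro k hk
      simp only [Finset.mem_Icc] at hk
      simp only [Finset.mem_range]
      omega
    set E : ℕ → ℝ := fun k => (n.choose k : ℝ) * x ^ k * y ^ (n-k) with hEdef
    have hE0 : ∀ k, 0 ≤ E k := fun k => by
      simp only [hEdef]; positivity
    have htotal : ∑ k ∈ Finset.range (n+1), E k = s ^ n := by
      rw [hsdef, add_pow]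
      exact Finset.sum_congr rfl fun k _ => by ring
    -- bound on the complement sum
    have hbd : ∀ k ∈ Finset.range (n+1) \ Finset.Icc N (n-N),
        E k ≤ ((n:ℝ)+1) ^ N * P * y ^ n + ((n:ℝ)+1) ^ N * Q * x ^ n := by
      intro k hk
      simp only [Finset.mem_sdiff, Finset.mem_range, Finset.mem_Icc, not_and_or, not_le] at hk
      obtain ⟨hkn, hcase⟩ := hk
      have hkn' : k ≤ n := by omega
      rcases hcase with hkN | hkN
      · have := aux_term_small hy (N := N) (n := n) (k := k) hkN hkn' hx.le
        have h2 : ((n:ℝ)+1) ^ N * (max x 1) ^ N * (max y⁻¹ 1) ^ N * y ^ n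
            = ((n:ℝ)+1) ^ N * P * y ^ n := by rw [hPdef]; ring
        rw [h2] at this
        have h3 : (0:ℝ) ≤ ((n:ℝ)+1) ^ N * Q * x ^ n := by positivity
        simp only [hEdef]
        linarith
      · have hnk : n - k < N := by omega
        have hnk' : n - k ≤ n := by omega
        have := aux_term_small hx (N := N) (n := n) (k := n - k) hnk hnk' hy.le
        have hrw : E k = (n.choose (n-k) : ℝ) * y ^ (n-k) * x ^ (n-(n-k)) := by
          simp only [hEdef]
          rw [Nat.choose_symm hkn', Nat.sub_sub_self hkn']
          ring
        have h2 : ((n:ℝ)+1) ^ N * (max y 1) ^ N * (max x⁻¹ 1) ^ N * x ^ n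
            = ((n:ℝ)+1) ^ N * Q * x ^ n := by rw [hQdef]; ring
        rw [h2] at this
        have h3 : (0:ℝ) ≤ ((n:ℝ)+1) ^ N * P * y ^ n := by positivity
        rw [hrw]
        linarith
    have hcard_sdiff : ((Finset.range (n+1) \ Finset.Icc N (n-N)).card : ℝ) ≤ (n:ℝ)+1 := by
      have := Finset.card_le_card (Finset.sdiff_subset (s := Finset.range (n+1))
        (t := Finset.Icc N (n-N)))
      rw [Finset.card_range] at this
      exact_mod_cast this
    have hsdiff_le : ∑ k ∈ Finset.range (n+1) \ Finset.Icc N (n-N), E k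
        ≤ ((n:ℝ)+1) ^ (N+1) * P * y ^ n + ((n:ℝ)+1) ^ (N+1) * Q * x ^ n := by
      calc ∑ k ∈ Finset.range (n+1) \ Finset.Icc N (n-N), E k
          ≤ ∑ k ∈ Finset.range (n+1) \ Finset.Icc N (n-N),
              (((n:ℝ)+1) ^ N * P * y ^ n + ((n:ℝ)+1) ^ N * Q * x ^ n) :=
            Finset.sum_le_sum hbd
        _ = ((Finset.range (n+1) \ Finset.Icc N (n-N)).card : ℝ) *
              (((n:ℝ)+1) ^ N * P * y ^ n + ((n:ℝ)+1) ^ N * Q * x ^ n) := by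
            rw [Finset.sum_const, nsmul_eq_mul]
        _ ≤ ((n:ℝ)+1) * (((n:ℝ)+1) ^ N * P * y ^ n + ((n:ℝ)+1) ^ N * Q * x ^ n) := by
            refine mul_le_mul_of_nonneg_right hcard_sdiff (by positivity)
        _ = ((n:ℝ)+1) ^ (N+1) * P * y ^ n + ((n:ℝ)+1) ^ (N+1) * Q * x ^ n := by ring
    -- the complement sum is at most s^n/2
    have hsn : (0:ℝ) < s ^ n := by positivity
    have hq1 : ((n:ℝ)+1) ^ (N+1) * P * y ^ n ≤ s ^ n / 4 := by
      have h' := mul_le_mul_of_nonneg_right ht1.le hsn.le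
      have he : P * (((n:ℝ)+1)) ^ (N+1) * (y/s) ^ n * s ^ n = ((n:ℝ)+1) ^ (N+1) * P * y ^ n := by
        rw [div_pow]
        field_simp
      rw [he] at h'
      linarith
    have hq2 : ((n:ℝ)+1) ^ (N+1) * Q * x ^ n ≤ s ^ n / 4 := by
      have h' := mul_le_mul_of_nonneg_right ht2.le hsn.le
      have he : Q * (((n:ℝ)+1)) ^ (N+1) * (x/s) ^ n * s ^ n = ((n:ℝ)+1) ^ (N+1) * Q * x ^ n := by
        rw [div_pow]
        field_simp
      rw [he] at h'
      linarith
    have hmid : s ^ n / 2 ≤ ∑ k ∈ Finset.Icc N (n-N), E k := by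
      have hsplit := Finset.sum_sdiff (f := E) hsub
      linarith [hsdiff_le, hq1, hq2, htotal ▸ hsplit]
    -- extract a single large term
    have hne : (Finset.Icc N (n-N)).Nonempty := Finset.nonempty_Icc.2 hNn
    have hcardM_pos : (0:ℝ) < ((Finset.Icc N (n-N)).card : ℝ) := by
      exact_mod_cast Finset.card_pos.2 hne
    have hcardM_le : ((Finset.Icc N (n-N)).card : ℝ) ≤ (n:ℝ)+1 := by
      have := Finset.card_le_card hsub
      rw [Finset.card_range] at this
      exact_mod_cast this
    obtain ⟨k₀, hk₀M, hk₀⟩ : ∃ k ∈ Finset.Icc N (n-N),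
        s ^ n / 2 / ((Finset.Icc N (n-N)).card : ℝ) ≤ E k := by
      refine Finset.exists_le_of_sum_le hne ?_
      rw [Finset.sum_const, nsmul_eq_mul, mul_div_cancel₀ _ hcardM_pos.ne']
      exact hmid
    have hk₀big : s ^ n / (2 * ((n:ℝ)+1)) ≤ E k₀ := by
      refine le_trans ?_ hk₀
      rw [div_div]
      refine div_le_div_of_nonneg_left hsn.le (by nlinarith [hcardM_pos]) (by nlinarith [hcardM_le])
    -- e n ≥ E k₀
    simp only [Finset.mem_Icc] at hk₀M
    have hck : x ^ k₀ ≤ c k₀ := hNc k₀ (by omega)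
    have hdk : y ^ (n - k₀) ≤ d (n - k₀) := hNd (n - k₀) (by omega)
    have hterm : E k₀ ≤ (n.choose k₀ : ℝ) * c k₀ * d (n - k₀) := by
      simp only [hEdef]
      refine mul_le_mul (mul_le_mul le_rfl hck (by positivity) (Nat.cast_nonneg _)) hdk
        (by positivity) ?_
      exact mul_nonneg (Nat.cast_nonneg _) (hc0 k₀)
    have hen : s ^ n / (2 * ((n:ℝ)+1)) ≤
        ∑ k ∈ Finset.range (n+1), (n.choose k : ℝ) * c k * d (n-k) := by
      refine le_trans (hk₀big.trans hterm) ?_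
      refine Finset.single_le_sum (fun k _ => mul_nonneg (mul_nonneg (Nat.cast_nonneg _)
        (hc0 k)) (hd0 (n-k))) ?_
      simp only [Finset.mem_range]; omega
    -- conclude
    calc b < s / (2*((n:ℝ)+1)) ^ ((1:ℝ)/n) := hblt
      _ = (s ^ n / (2 * ((n:ℝ)+1))) ^ ((1:ℝ)/n) := by
          rw [Real.div_rpow (by positivity) (by positivity), aux_pow_root hs.le hn0]
      _ ≤ (∑ k ∈ Finset.range (n + 1), (n.choose k : ℝ) * c k * d (n - k)) ^ ((1:ℝ)/n) :=
          Real.rpow_le_rpow (by positivity) hen (by positivity)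
  · intro a ha
    have hδ : 0 < (a - (g+h))/3 := by linarith
    set δ := (a - (g+h))/3 with hδdef
    obtain ⟨Cc, hCc1, hCc⟩ := aux_upper_s13 hc0 (by linarith : (0:ℝ) < g + δ) hc (by linarith)
    obtain ⟨Cd, hCd1, hCd⟩ := aux_upper_s13 hd0 (by linarith : (0:ℝ) < h + δ) hd (by linarith)
    set s := g + δ + (h + δ) with hsdef
    have hs : 0 < s := by positivity
    have hsa : s < a := by simp only [hsdef, hδdef]; linarith
    have hsum : ∀ n : ℕ, ∑ k ∈ Finset.range (n+1), (n.choose k:ℝ) * c k * d (n-k)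
        ≤ Cc * Cd * s ^ n := by
      intro n
      calc ∑ k ∈ Finset.range (n+1), (n.choose k:ℝ) * c k * d (n-k)
          ≤ ∑ k ∈ Finset.range (n+1),
              (n.choose k:ℝ) * (Cc * (g+δ) ^ k) * (Cd * (h+δ) ^ (n-k)) := by
            refine Finset.sum_le_sum fun k _ => ?_
            have h1 := hCc k
            have h2 := hCd (n-k)
            refine mul_le_mul (mul_le_mul le_rfl h1 (hc0 k) (Nat.cast_nonneg _)) h2 (hd0 _) ?_
            have : (0:ℝ) < Cc * (g+δ) ^ k := by positivity
            positivity
        _ = Cc * Cd * s ^ n := by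
            rw [hsdef, add_pow, Finset.mul_sum]
            refine Finset.sum_congr rfl fun k _ => ?_
            ring
    have hlim : Tendsto (fun n : ℕ => (Cc*Cd) ^ ((1:ℝ)/n) * s) atTop (𝓝 (1 * s)) :=
      (aux_const (by positivity)).mul_const s
    rw [one_mul] at hlim
    filter_upwards [eventually_ge_atTop 1, hlim.eventually_lt_const hsa] with n hn1 hn2
    have hn0 : n ≠ 0 := by omega
    calc (∑ k ∈ Finset.range (n + 1), (n.choose k : ℝ) * c k * d (n - k)) ^ ((1:ℝ)/n)
        ≤ (Cc * Cd * s ^ n) ^ ((1:ℝ)/n) :=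
          Real.rpow_le_rpow (he0 n) (hsum n) (by positivity)
      _ = (Cc*Cd) ^ ((1:ℝ)/n) * s := by
          rw [Real.mul_rpow (by positivity) (by positivity), aux_pow_root hs.le hn0]
      _ < a := hn2
end

section
/- Let λ be the unique real root of x^5 − 2x^4 − 2x^2 − 2x − 1 and let (r_n) = (1, 1, 3, 5, 6, 6, 6, …) (constant 6 from n = 5 on). Then λ is the unique positive solution of Σ_{n≥1} r_n λ^{-n} = 1. -/
/-- The sequence (1, 1, 3, 5, 6, 6, 6, …) counting sum indecomposable
permutations properly contained in the antichain `A = U^{12,12} ∪ U^{21,12}`. -/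
def r17 : ℕ → ℕ := fun n =>
  if n ≤ 2 then 1 else if n = 3 then 3 else if n = 4 then 5 else 6

lemma sum_formula (x : ℝ) (hx : 1 < x) :
    ∑' n : ℕ, (r17 (n + 1) : ℝ) * x⁻¹ ^ (n + 1)
      = x⁻¹ + x⁻¹^2 + 3*x⁻¹^3 + 5*x⁻¹^4 + 6 * x⁻¹^5 / (1 - x⁻¹) := by
  have hx0 : (0:ℝ) < x := lt_trans one_pos hx
  have hq : x⁻¹ < 1 := inv_lt_one_of_one_lt₀ hx
  have hq0 : 0 ≤ x⁻¹ := by positivity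
  have hgeo : Summable (fun n : ℕ => x⁻¹ ^ n) := summable_geometric_of_lt_one hq0 hq
  have hsum : Summable (fun n : ℕ => (r17 (n + 1) : ℝ) * x⁻¹ ^ (n + 1)) := by
    have hg : Summable (fun n : ℕ => 6 * x⁻¹ ^ (n+1)) := by
      refine ((hgeo.mul_left (6*x⁻¹)).congr fun n => ?_)
      rw [pow_succ]; ring
    refine Summable.of_nonneg_of_le (fun n => by positivity) (fun n => ?_) hg
    have : (r17 (n+1) : ℝ) ≤ 6 := by
      unfold r17; split_ifs <;> norm_num
    exact mul_le_mul_of_nonneg_right this (by positivity)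
  have h4 := Summable.sum_add_tsum_nat_add 4 hsum
  rw [← h4]
  have htail : ∑' n : ℕ, (r17 (n + 4 + 1) : ℝ) * x⁻¹ ^ (n + 4 + 1)
      = 6 * x⁻¹^5 / (1 - x⁻¹) := by
    have : ∀ n : ℕ, (r17 (n + 4 + 1) : ℝ) * x⁻¹ ^ (n + 4 + 1)
        = (6 * x⁻¹^5) * x⁻¹ ^ n := by
      intro n
      have : r17 (n + 5) = 6 := by unfold r17; split_ifs <;> omega
      rw [show n + 4 + 1 = n + 5 from rfl, this]
      push_cast; ring
    rw [tsum_congr this, tsum_mul_left, tsum_geometric_of_lt_one hq0 hq]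
    field_simp
  rw [htail]
  norm_num [Finset.sum_range_succ, r17]

theorem stmt_17 (lam : ℝ)
    (hroot : lam^5 - 2*lam^4 - 2*lam^2 - 2*lam - 1 = 0)
    (huniq : ∀ x : ℝ, x^5 - 2*x^4 - 2*x^2 - 2*x - 1 = 0 → x = lam) :
    (0 < lam ∧ ∑' n : ℕ, (r17 (n + 1) : ℝ) * lam⁻¹ ^ (n + 1) = 1) ∧
    ∀ x : ℝ, 0 < x → (∑' n : ℕ, (r17 (n + 1) : ℝ) * x⁻¹ ^ (n + 1) = 1) → x = lam := by
  -- lam is between 2 and 3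
  have hlam2 : 2 < lam := by
    have hcont : ContinuousOn (fun x : ℝ => x^5 - 2*x^4 - 2*x^2 - 2*x - 1) (Set.Icc 2 3) := by
      fun_prop
    obtain ⟨c, hc, hc0⟩ := intermediate_value_Icc (by norm_num : (2:ℝ) ≤ 3) hcont
      (by norm_num : (0:ℝ) ∈ Set.Icc ((2:ℝ)^5 - 2*2^4 - 2*2^2 - 2*2 - 1) (3^5 - 2*3^4 - 2*3^2 - 2*3 - 1))
    have := huniq c hc0
    subst this
    rcases hc with ⟨h2, h3⟩
    rcases eq_or_lt_of_le h2 with h | h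
    · exfalso; rw [← h] at hc0; norm_num at hc0
    · exact h
  have hlam1 : 1 < lam := by linarith
  have hlam0 : 0 < lam := by linarith
  have key : ∀ x : ℝ, 1 < x →
      ((∑' n : ℕ, (r17 (n + 1) : ℝ) * x⁻¹ ^ (n + 1) = 1) ↔
        x^5 - 2*x^4 - 2*x^2 - 2*x - 1 = 0) := by
    intro x hx
    rw [sum_formula x hx]
    have hx0 : x ≠ 0 := by positivity
    have hx1 : x - 1 ≠ 0 := by intro h; nlinarith
    rw [inv_eq_one_div]
    have hx11 : x^(11:ℕ) ≠ 0 := pow_ne_zero _ hx0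
    constructor <;> intro h
    · field_simp at h
      have h2 : x^(11:ℕ) * (x^5 - 2*x^4 - 2*x^2 - 2*x - 1) = 0 := by linear_combination (-(x^(11:ℕ))) * h
      rcases mul_eq_zero.1 h2 with h3 | h3
      · exact absurd h3 hx11
      · exact h3
    · field_simp
      linear_combination -h
  refine ⟨⟨hlam0, (key lam hlam1).2 hroot⟩, ?_⟩
  intro x hx hsum
  by_cases hx1 : 1 < x
  · exact huniq x ((key x hx1).1 hsum)
  · exfalso
    push_neg at hx1
    have hxq : 1 ≤ x⁻¹ := one_le_inv₀ hx |>.2 hx1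
    have : ¬ Summable (fun n : ℕ => (r17 (n + 1) : ℝ) * x⁻¹ ^ (n + 1)) := by
      intro hs
      have h0 := hs.tendsto_atTop_zero
      have : ∀ n : ℕ, (1:ℝ) ≤ (r17 (n + 1) : ℝ) * x⁻¹ ^ (n + 1) := by
        intro n
        have h1 : (1:ℝ) ≤ (r17 (n+1) : ℝ) := by
          have : 1 ≤ r17 (n+1) := by unfold r17; split_ifs <;> omega
          exact_mod_cast this
        have h2 : (1:ℝ) ≤ x⁻¹ ^ (n+1) := one_le_pow₀ hxq
        nlinarith
      have := le_of_tendsto_of_tendsto tendsto_const_nhds h0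
        (Filter.Eventually.of_forall this)
      linarith
    rw [tsum_eq_zero_of_not_summable this] at hsum
    norm_num at hsum
end
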